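/- arXiv:1504.05807 — 5 statements merged into one kernel-verified Lean document; each statement's English description precedes it below -/
import Mathlib

section
/- Any unit-norm system of N = n² vectors in ℂ^n has coherence μ ≥ 1/√(n+1). -/
set_option maxHeartbeats 1000000

open Complex

lemma sum4_comm {M : Type*} [AddCommMonoid M] {α β γ δ : Type*}
    [Fintype α] [Fintype β] [Fintype γ] [Fintype δ] (f : α → β → γ → δ → M) :
    ∑ r, ∑ s, ∑ i, ∑ k, f r s i k = ∑ i, ∑ k, ∑ r, ∑ s, f r s i k := by
  calc ∑ r, ∑ s, ∑ i, ∑ k, f r s i k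
      = ∑ r, ∑ i, ∑ s, ∑ k, f r s i k :=
        Finset.sum_congr rfl fun r _ => Finset.sum_comm
    _ = ∑ i, ∑ r, ∑ s, ∑ k, f r s i k := Finset.sum_comm
    _ = ∑ i, ∑ r, ∑ k, ∑ s, f r s i k :=
        Finset.sum_congr rfl fun i _ => Finset.sum_congr rfl fun r _ => Finset.sum_comm
    _ = ∑ i, ∑ k, ∑ r, ∑ s, f r s i k :=
        Finset.sum_congr rfl fun i _ => Finset.sum_comm

lemma gram_identity (n : ℕ) (a : Fin (n ^ 2) → EuclideanSpace ℂ (Fin n)) :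
    ∑ r, ∑ s, ((starRingEnd ℂ) (inner ℂ (a r) (a s) : ℂ)) * (inner ℂ (a r) (a s) : ℂ)
      = ∑ i, ∑ k, (starRingEnd ℂ) (∑ j, a j i * (starRingEnd ℂ) (a j k))
          * (∑ j, a j i * (starRingEnd ℂ) (a j k)) := by
  have h1 : ∀ r s : Fin (n^2), ((starRingEnd ℂ) (inner ℂ (a r) (a s) : ℂ)) * (inner ℂ (a r) (a s) : ℂ)
      = ∑ i, ∑ k, ((starRingEnd ℂ) (a r i) * a r k) * (a s i * (starRingEnd ℂ) (a s k)) := by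
    intro r s
    rw [PiLp.inner_apply]
    simp only [RCLike.inner_apply, map_sum, map_mul, RCLike.conj_conj]
    rw [Fintype.sum_mul_sum, Finset.sum_comm]
    exact Finset.sum_congr rfl fun i _ => Finset.sum_congr rfl fun k _ => by ring
  simp_rw [h1]
  rw [sum4_comm]
  exact Finset.sum_congr rfl fun i _ => Finset.sum_congr rfl fun k _ => by
    rw [map_sum, Fintype.sum_mul_sum]
    simp only [map_mul, RCLike.conj_conj]

/-- Welch bound: any system of `N = n²` unit-norm vectors in `ℂ^n` (with
`n > 1` so that distinct pairs exist) has coherence at least `1/√(n+1)`. -/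
theorem welch_bound_n_squared (n : ℕ) (hn : 1 < n)
    (a : Fin (n ^ 2) → EuclideanSpace ℂ (Fin n)) (ha : ∀ j, ‖a j‖ = 1) :
    ∃ r s : Fin (n ^ 2), r ≠ s ∧
      1 / Real.sqrt (n + 1) ≤ ‖(inner ℂ (a r) (a s) : ℂ)‖ := by
  have hn0 : (0:ℝ) < n := by positivity
  set T : Fin n → Fin n → ℂ := fun i k => ∑ j, a j i * (starRingEnd ℂ) (a j k) with hT
  set f : Fin (n^2) → Fin (n^2) → ℝ := fun r s => Complex.normSq (inner ℂ (a r) (a s) : ℂ) with hf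
  -- real version of the Gram identity
  have hS : ∑ r, ∑ s, f r s = ∑ i, ∑ k, Complex.normSq (T i k) := by
    have := gram_identity n a
    have hcast : ((∑ r, ∑ s, f r s : ℝ) : ℂ) = ((∑ i, ∑ k, Complex.normSq (T i k) : ℝ) : ℂ) := by
      push_cast [hf, Complex.normSq_eq_conj_mul_self]
      exact this
    exact_mod_cast hcast
  -- column sums of squared norms
  set d : Fin n → ℝ := fun i => ∑ j, Complex.normSq (a j i) with hd
  have hTdiag : ∀ i, T i i = (d i : ℂ) := by
    intro i
    simp [hT, hd, Complex.mul_conj]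
  have hnormunit : ∀ j, ∑ i, Complex.normSq (a j i) = 1 := by
    intro j
    have h1 : (inner ℂ (a j) (a j) : ℂ) = ((∑ i, Complex.normSq (a j i) : ℝ) : ℂ) := by
      rw [PiLp.inner_apply]
      simp only [RCLike.inner_apply, ← Complex.normSq_eq_conj_mul_self]
      norm_cast
      simp [Complex.mul_conj]
    have h2 : (inner ℂ (a j) (a j) : ℂ) = 1 := by
      rw [inner_self_eq_norm_sq_to_K, ha j]; norm_num
    rw [h1] at h2
    exact_mod_cast h2
  have hdsum : ∑ i, d i = (n:ℝ)^2 := by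
    rw [hd, Finset.sum_comm]
    simp [hnormunit]
  -- lower bound n^3 for the full sum
  have hcheb : ((n:ℝ)^2)^2 ≤ (n:ℝ) * ∑ i, (d i)^2 := by
    have := sq_sum_le_card_mul_sum_sq (s := (Finset.univ : Finset (Fin n))) (f := d)
    rw [hdsum] at this
    simpa using this
  have hdiagT : ∑ i, (d i)^2 ≤ ∑ i, ∑ k, Complex.normSq (T i k) := by
    apply Finset.sum_le_sum
    intro i _
    have h1 : (d i)^2 = Complex.normSq (T i i) := by
      rw [hTdiag i, Complex.normSq_ofReal]; ring
    rw [h1]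
    exact Finset.single_le_sum (f := fun k => Complex.normSq (T i k))
      (fun k _ => Complex.normSq_nonneg _) (Finset.mem_univ i)
  have hS3 : (n:ℝ)^3 ≤ ∑ r, ∑ s, f r s := by
    rw [hS]
    have h4 : (n:ℝ)^4 ≤ (n:ℝ) * ∑ i, ∑ k, Complex.normSq (T i k) := by
      calc (n:ℝ)^4 = ((n:ℝ)^2)^2 := by ring
        _ ≤ (n:ℝ) * ∑ i, (d i)^2 := hcheb
        _ ≤ _ := by nlinarith [hdiagT]
    nlinarith
  -- contradiction argument
  by_contra hcon
  push_neg at hcon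
  have hbound : ∀ r : Fin (n^2), ∑ s, f r s < (n:ℝ) := by
    intro r
    have hdiag : f r r = 1 := by
      have h0 : (inner ℂ (a r) (a r) : ℂ) = 1 := by
        rw [inner_self_eq_norm_sq_to_K, ha r]; norm_num
      simp only [hf]
      rw [h0, map_one]
    have hne : (Finset.univ.erase r).Nonempty := by
      rw [← Finset.card_pos, Finset.card_erase_of_mem (Finset.mem_univ r), Finset.card_univ,
        Fintype.card_fin]
      have : 2 ≤ n^2 := by nlinarith
      omega
    have hoff : ∀ s ∈ Finset.univ.erase r, f r s < 1/((n:ℝ)+1) := by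
      intro s hs
      have hrs : r ≠ s := (Finset.ne_of_mem_erase hs).symm
      have h1 := hcon r s hrs
      have h2 : f r s = ‖(inner ℂ (a r) (a s) : ℂ)‖^2 := by
        simp only [hf]
        rw [Complex.normSq_eq_norm_sq]
      have h3 : ‖(inner ℂ (a r) (a s) : ℂ)‖^2 < (1 / Real.sqrt ((n:ℝ)+1))^2 :=
        pow_lt_pow_left₀ h1 (norm_nonneg _) (by norm_num)
      have h4 : (1 / Real.sqrt ((n:ℝ)+1))^2 = 1/((n:ℝ)+1) := by
        rw [div_pow, one_pow, Real.sq_sqrt (by positivity)]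
      rw [h2]
      rw [h4] at h3
      exact h3
    have hsum_off : ∑ s ∈ Finset.univ.erase r, f r s < ((n:ℝ)^2 - 1) * (1/((n:ℝ)+1)) := by
      calc ∑ s ∈ Finset.univ.erase r, f r s
          < ∑ _s ∈ Finset.univ.erase r, 1/((n:ℝ)+1) :=
            Finset.sum_lt_sum_of_nonempty hne hoff
        _ = ((n:ℝ)^2 - 1) * (1/((n:ℝ)+1)) := by
            rw [Finset.sum_const, Finset.card_erase_of_mem (Finset.mem_univ r),
              Finset.card_univ, Fintype.card_fin, nsmul_eq_mul]
            have : 1 ≤ n^2 := by nlinarith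
            push_cast [this]
            ring
    have hsplit : ∑ s, f r s = f r r + ∑ s ∈ Finset.univ.erase r, f r s :=
      (Finset.add_sum_erase _ _ (Finset.mem_univ r)).symm
    have hfrac : ((n:ℝ)^2 - 1) * (1/((n:ℝ)+1)) = (n:ℝ) - 1 := by
      have h1 : (n:ℝ) + 1 ≠ 0 := by positivity
      field_simp
      ring
    rw [hsplit, hdiag]
    rw [hfrac] at hsum_off
    linarith
  haveI : Nonempty (Fin (n^2)) := ⟨⟨0, by nlinarith⟩⟩
  have : ∑ r, ∑ s, f r s < (n:ℝ)^3 := by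
    calc ∑ r, ∑ s, f r s < ∑ _r : Fin (n^2), (n:ℝ) :=
        Finset.sum_lt_sum_of_nonempty Finset.univ_nonempty (fun r _ => hbound r)
      _ = (n:ℝ)^3 := by
        rw [Finset.sum_const, Finset.card_univ, Fintype.card_fin, nsmul_eq_mul]
        push_cast; ring
  linarith
end

section
/- Let A ∈ ℂ^{n×N} have unit-norm columns and coherence μ. If (2k-1)μ < 1, then every k-sparse vector x ∈ ℂ^N is the unique minimizer of ‖x'‖₁ subject to A x' = A x; i.e., Basis Pursuit recovers all k-sparse vectors. -/
open Complex Finset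

/-- Basis Pursuit recovery under coherence: if `A` has unit-norm columns,
coherence at most `μ`, and `(2k-1)μ < 1`, then every `k`-sparse `x` is the
unique `ℓ¹` minimizer among solutions of `A x' = A x`. -/
theorem basisPursuit_recovery_of_coherence (n N k : ℕ)
    (A : Matrix (Fin n) (Fin N) ℂ) (μ : ℝ)
    (hcol : ∀ j, ∑ i, ‖A i j‖ ^ 2 = 1)
    (hcoh : ∀ r s, r ≠ s →
      ‖∑ i, (starRingEnd ℂ) (A i r) * A i s‖ ≤ μ)
    (hk : (2 * (k : ℝ) - 1) * μ < 1) :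
    ∀ x : Fin N → ℂ, {j | x j ≠ 0}.ncard ≤ k →
      ∀ x' : Fin N → ℂ, A.mulVec x' = A.mulVec x → x' ≠ x →
        ∑ j, ‖x j‖ < ∑ j, ‖x' j‖ := by
  intro x hsupp x' hAx hne
  classical
  set h : Fin N → ℂ := fun j => x' j - x j with hdef
  have hAh : A.mulVec h = 0 := by
    have : A.mulVec (x' - x) = A.mulVec x' - A.mulVec x := Matrix.mulVec_sub A x' x
    simpa [hdef, hAx, sub_eq_zero, Pi.sub_def] using this
  have hh0 : ∃ r, h r ≠ 0 := by
    by_contra hc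
    push_neg at hc
    apply hne
    funext j
    have := hc j
    simpa [hdef, sub_eq_zero] using this
  set G : Fin N → Fin N → ℂ := fun r s => ∑ i, (starRingEnd ℂ) (A i r) * A i s with hG
  have hGrr : ∀ r, G r r = 1 := by
    intro r
    have e1 : G r r = ((∑ i, ‖A i r‖ ^ 2 : ℝ) : ℂ) := by
      push_cast
      refine Finset.sum_congr rfl fun i _ => ?_
      rw [mul_comm, Complex.mul_conj']
    rw [e1, hcol]
    norm_num
  have key : ∀ r, ‖h r‖ ≤ μ * ∑ s ∈ univ.erase r, ‖h s‖ := by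
    intro r
    have h0 : ∑ s, G r s * h s = 0 := by
      have e : ∑ i, (starRingEnd ℂ) (A i r) * (A.mulVec h i) = 0 := by
        simp [hAh]
      rw [← e]
      simp only [Matrix.mulVec, dotProduct, Finset.mul_sum]
      rw [Finset.sum_comm]
      refine Finset.sum_congr rfl fun s _ => ?_
      rw [hG, Finset.sum_mul]
      refine Finset.sum_congr rfl fun i _ => by ring
    have hr : h r = -∑ s ∈ univ.erase r, G r s * h s := by
      have e2 : G r r * h r + ∑ s ∈ univ.erase r, G r s * h s = 0 := by
        rw [Finset.add_sum_erase univ (fun s => G r s * h s) (mem_univ r)]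
        exact h0
      rw [hGrr, one_mul] at e2
      exact eq_neg_of_add_eq_zero_left e2
    calc ‖h r‖ = ‖∑ s ∈ univ.erase r, G r s * h s‖ := by
          rw [hr, norm_neg]
      _ ≤ ∑ s ∈ univ.erase r, ‖G r s * h s‖ :=
          norm_sum_le _ _
      _ ≤ ∑ s ∈ univ.erase r, μ * ‖h s‖ := by
          refine Finset.sum_le_sum fun s hs => ?_
          rw [norm_mul]
          have hrs : r ≠ s := fun e => (Finset.mem_erase.1 hs).1 e.symm
          exact mul_le_mul_of_nonneg_right (hcoh r s hrs) (norm_nonneg _)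
      _ = μ * ∑ s ∈ univ.erase r, ‖h s‖ := by rw [Finset.mul_sum]
  set T : ℝ := ∑ j, ‖h j‖ with hT
  have habs_nonneg : ∀ j, 0 ≤ ‖h j‖ := fun j => norm_nonneg _
  have hTpos : 0 < T := by
    obtain ⟨r, hr⟩ := hh0
    have h1 : 0 < ‖h r‖ := norm_pos_iff.mpr hr
    have h2 : ‖h r‖ ≤ T := by
      rw [hT]
      exact Finset.single_le_sum (fun j _ => habs_nonneg j) (mem_univ r)
    linarith
  have herase : ∀ r, ∑ s ∈ univ.erase r, ‖h s‖ = T - ‖h r‖ := by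
    intro r
    have := Finset.add_sum_erase univ (fun s => ‖h s‖) (mem_univ r)
    rw [hT]
    linarith [this]
  have hmu : 0 < μ := by
    obtain ⟨r, hr⟩ := hh0
    have h1 : 0 < ‖h r‖ := norm_pos_iff.mpr hr
    have h2 := key r
    by_contra hc
    push_neg at hc
    have h3 : ∑ s ∈ univ.erase r, ‖h s‖ ≥ 0 :=
      Finset.sum_nonneg fun s _ => habs_nonneg s
    nlinarith
  have hbound : ∀ r, ‖h r‖ ≤ μ * T / (1 + μ) := by
    intro r
    have h2 := key r
    rw [herase r] at h2
    have h3 : (1 + μ) * ‖h r‖ ≤ μ * T := by nlinarith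
    rw [le_div_iff₀ (by linarith : (0:ℝ) < 1 + μ)]
    linarith
  -- support finset
  set S : Finset (Fin N) := univ.filter (fun j => x j ≠ 0) with hS
  have hScard : (S.card : ℝ) ≤ k := by
    have e : {j | x j ≠ 0}.ncard = S.card := by
      rw [hS]
      rw [← Set.ncard_coe_finset]
      congr 1
      ext j
      simp
    rw [e] at hsupp
    exact_mod_cast hsupp
  have hSsum : ∑ j ∈ S, ‖h j‖ < T / 2 := by
    have h1 : ∑ j ∈ S, ‖h j‖ ≤ (S.card : ℝ) * (μ * T / (1 + μ)) := by
      calc ∑ j ∈ S, ‖h j‖ ≤ ∑ _j ∈ S, μ * T / (1 + μ) :=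
            Finset.sum_le_sum fun j _ => hbound j
        _ = (S.card : ℝ) * (μ * T / (1 + μ)) := by
            rw [Finset.sum_const, nsmul_eq_mul]
    have h2 : (S.card : ℝ) * (μ * T / (1 + μ)) ≤ (k : ℝ) * (μ * T / (1 + μ)) := by
      apply mul_le_mul_of_nonneg_right hScard
      positivity
    have hmu2 : 2 * (k : ℝ) * μ < 1 + μ := by nlinarith [hk]
    have h3 : (k : ℝ) * (μ * T / (1 + μ)) < T / 2 := by
      have e : (k : ℝ) * (μ * T / (1 + μ)) = ((k : ℝ) * μ * T) / (1 + μ) := by ring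
      rw [e, div_lt_div_iff₀ (by linarith : (0:ℝ) < 1 + μ) (by norm_num : (0:ℝ) < 2)]
      nlinarith
    linarith
  set Sc : Finset (Fin N) := univ.filter (fun j => ¬ x j ≠ 0) with hSc
  have hxS : ∑ j, ‖x j‖ = ∑ j ∈ S, ‖x j‖ := by
    symm
    apply Finset.sum_subset (Finset.subset_univ S)
    intro j _ hjS
    have hx0 : x j = 0 := by
      by_contra hc
      exact hjS (by simp [hS, hc])
    simp [hx0]
  have hsplit : ∑ j ∈ S, ‖x' j‖ + ∑ j ∈ Sc, ‖x' j‖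
      = ∑ j, ‖x' j‖ := by
    rw [hS, hSc]
    exact Finset.sum_filter_add_sum_filter_not univ _ _
  have hsplit2 : ∑ j ∈ S, ‖h j‖ + ∑ j ∈ Sc, ‖h j‖ = T := by
    rw [hS, hSc, hT]
    exact Finset.sum_filter_add_sum_filter_not univ _ _
  have hcomp : ∑ j ∈ Sc, ‖x' j‖ = ∑ j ∈ Sc, ‖h j‖ := by
    refine Finset.sum_congr rfl fun j hj => ?_
    have hx0 : x j = 0 := by
      have := (Finset.mem_filter.1 (hSc ▸ hj)).2
      simpa using this
    simp [hdef, hx0]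
  have hlower : ∑ j ∈ S, (‖x j‖ - ‖h j‖)
      ≤ ∑ j ∈ S, ‖x' j‖ := by
    refine Finset.sum_le_sum fun j _ => ?_
    have e : x j = x' j - h j := by simp [hdef]
    calc ‖x j‖ - ‖h j‖
        ≤ (‖x' j‖ + ‖h j‖) - ‖h j‖ := by
          have : ‖x j‖ ≤ ‖x' j‖ + ‖h j‖ := by
            rw [e, sub_eq_add_neg]
            refine le_trans (norm_add_le _ _) ?_
            simp [norm_neg]
          linarith
      _ = ‖x' j‖ := by ring
  rw [Finset.sum_sub_distrib] at hlower
  calc ∑ j, ‖x j‖ = ∑ j ∈ S, ‖x j‖ := hxS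
    _ < (∑ j ∈ S, ‖x j‖ - ∑ j ∈ S, ‖h j‖)
        + (T - ∑ j ∈ S, ‖h j‖) := by linarith
    _ ≤ ∑ j ∈ S, ‖x' j‖ + ∑ j ∈ Sc, ‖x' j‖ := by
        rw [hcomp]
        linarith
    _ = ∑ j, ‖x' j‖ := hsplit
end

section
/- Complex Bernstein inequality: let ε_1, ..., ε_n be independent random variables each uniformly distributed on the unit circle {z ∈ ℂ : |z| = 1}. Then for every u > 0, ℙ(|Σ_{q=1}^n ε_q| ≥ n u) ≤ 2 exp(−n u²/2). -/
open Complex MeasureTheory ProbabilityTheory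
open Complex MeasureTheory ProbabilityTheory
open scoped ENNReal NNReal


lemma steinhaus_integral (m : ℤ) :
    ∫ x in Set.Ico (0:ℝ) 1, Complex.exp (2 * Real.pi * Complex.I * m * x) =
      if m = 0 then 1 else 0 := by
  rcases eq_or_ne m 0 with hm | hm
  · simp [hm, Real.volume_Ico]
  · rw [if_neg hm]
    have h1 : ∫ x in Set.Ico (0:ℝ) 1, Complex.exp (2 * Real.pi * Complex.I * m * x) =
        ∫ x in (0:ℝ)..1, Complex.exp ((2 * Real.pi * Complex.I * m) * x) := by
      rw [intervalIntegral.integral_of_le zero_le_one,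
        MeasureTheory.integral_Ico_eq_integral_Ioo, MeasureTheory.integral_Ioc_eq_integral_Ioo]
    have hc : (2 * Real.pi * Complex.I * m : ℂ) ≠ 0 := by
      simp [Real.pi_ne_zero, Complex.I_ne_zero, hm]
    rw [h1, integral_exp_mul_complex hc]
    have : Complex.exp (2 * Real.pi * Complex.I * m * 1) = 1 := by
      rw [mul_one]
      have := Complex.exp_int_mul_two_pi_mul_I m
      rw [← this]
      ring_nf
    rw [mul_one] at this
    simp [this, sub_eq_zero]

lemma pi_integral_prod {n : ℕ} (μ : Measure ℝ) [SigmaFinite μ] (f : Fin n → ℝ → ℂ) :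
    ∫ x : Fin n → ℝ, ∏ q, f q (x q) ∂(Measure.pi fun _ => μ) = ∏ q, ∫ y, f q y ∂μ := by
  letI : MeasureSpace ℝ := ⟨μ⟩
  exact MeasureTheory.integral_fintype_prod_eq_prod (μ := fun _ => μ) f

lemma exists_perm_comp {k n : ℕ} (f g : Fin k → Fin n)
    (h : ∀ q, (Finset.univ.filter fun j => f j = q).card =
      (Finset.univ.filter fun j => g j = q).card) :
    ∃ σ : Equiv.Perm (Fin k), f ∘ σ = g := by
  have hcard : ∀ q, Fintype.card {j // g j = q} = Fintype.card {j // f j = q} := by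
    intro q
    rw [Fintype.card_subtype, Fintype.card_subtype, h q]
  let e : ∀ q, {j // g j = q} ≃ {j // f j = q} := fun q => Fintype.equivOfCardEq (hcard q)
  refine ⟨(Equiv.sigmaFiberEquiv g).symm.trans ((Equiv.sigmaCongrRight e).trans
    (Equiv.sigmaFiberEquiv f)), ?_⟩
  funext j
  simp only [Function.comp_apply, Equiv.coe_trans, Equiv.sigmaFiberEquiv,
    Equiv.sigmaCongrRight]
  exact (e (g j) ⟨j, rfl⟩).2

lemma card_pairs_le (k n : ℕ) :
    ((Finset.univ : Finset ((Fin k → Fin n) × (Fin k → Fin n))).filter fun p =>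
        ∀ q, (Finset.univ.filter fun j => p.1 j = q).card =
          (Finset.univ.filter fun j => p.2 j = q).card).card
      ≤ k.factorial * n ^ k := by
  classical
  have hsub : ((Finset.univ : Finset ((Fin k → Fin n) × (Fin k → Fin n))).filter fun p =>
        ∀ q, (Finset.univ.filter fun j => p.1 j = q).card =
          (Finset.univ.filter fun j => p.2 j = q).card)
      ⊆ (Finset.univ : Finset ((Fin k → Fin n) × Equiv.Perm (Fin k))).image
        (fun fs => (fs.1, fs.1 ∘ fs.2)) := by
    intro p hp
    rw [Finset.mem_filter] at hp
    obtain ⟨σ, hσ⟩ := exists_perm_comp p.1 p.2 hp.2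
    refine Finset.mem_image.2 ⟨(p.1, σ), Finset.mem_univ _, ?_⟩
    simp [hσ]
  calc _ ≤ _ := Finset.card_le_card hsub
    _ ≤ (Finset.univ : Finset ((Fin k → Fin n) × Equiv.Perm (Fin k))).card :=
        Finset.card_image_le
    _ = k.factorial * n ^ k := by
        simp [Finset.card_univ, Fintype.card_perm, Fintype.card_fun, mul_comm]

lemma norm_steinhaus (t : ℝ) : ‖Complex.exp (2 * Real.pi * Complex.I * t)‖ = 1 := by
  rw [Complex.norm_exp]
  have : (2 * Real.pi * Complex.I * t).re = 0 := by simp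
  simp [this]

lemma pow_conj_pow (a b : ℕ) (y : ℝ) :
    Complex.exp (2 * Real.pi * Complex.I * y) ^ a *
      (starRingEnd ℂ) (Complex.exp (2 * Real.pi * Complex.I * y)) ^ b =
    Complex.exp (2 * Real.pi * Complex.I * ((a : ℤ) - (b : ℤ)) * y) := by
  rw [← Complex.exp_conj]
  have hconj : (starRingEnd ℂ) (2 * Real.pi * Complex.I * y) =
      -(2 * Real.pi * Complex.I * y) := by
    simp [Complex.ext_iff]
  rw [hconj, ← Complex.exp_nat_mul, ← Complex.exp_nat_mul, ← Complex.exp_add]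
  congr 1
  push_cast
  ring

lemma prod_fiber_pow {k n : ℕ} (f : Fin k → Fin n) (h : Fin n → ℂ) :
    ∏ j, h (f j) = ∏ q, h q ^ ((Finset.univ.filter fun j => f j = q).card) := by
  classical
  rw [Finset.prod_comp]
  refine Finset.prod_subset (Finset.subset_univ _) ?_
  intro q _ hq
  have : (Finset.univ.filter fun j => f j = q) = ∅ := by
    rw [Finset.filter_eq_empty_iff]
    intro j _ hj
    exact hq (Finset.mem_image.2 ⟨j, Finset.mem_univ _, hj⟩)
  simp [this]

noncomputable def stMeasure : Measure ℝ := volume.restrict (Set.Ico (0:ℝ) 1)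

instance : IsProbabilityMeasure stMeasure :=
  ⟨by rw [stMeasure, Measure.restrict_apply_univ]; simp [Real.volume_Ico]⟩

noncomputable def stPi (n : ℕ) : Measure (Fin n → ℝ) := Measure.pi fun _ => stMeasure

instance (n : ℕ) : IsProbabilityMeasure (stPi n) := by
  rw [stPi]; infer_instance

lemma term_integral {k n : ℕ} (f g : Fin k → Fin n) :
    ∫ x : Fin n → ℝ, (∏ j, Complex.exp (2 * Real.pi * Complex.I * (x (f j)))) *
        ∏ j, (starRingEnd ℂ) (Complex.exp (2 * Real.pi * Complex.I * (x (g j)))) ∂(stPi n) =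
    if (∀ q, (Finset.univ.filter fun j => f j = q).card =
        (Finset.univ.filter fun j => g j = q).card) then 1 else 0 := by
  classical
  have hrw : ∀ x : Fin n → ℝ,
      (∏ j, Complex.exp (2 * Real.pi * Complex.I * (x (f j)))) *
        ∏ j, (starRingEnd ℂ) (Complex.exp (2 * Real.pi * Complex.I * (x (g j)))) =
      ∏ q, Complex.exp (2 * Real.pi * Complex.I *
        (((Finset.univ.filter fun j => f j = q).card : ℤ) -
          ((Finset.univ.filter fun j => g j = q).card : ℤ)) * (x q)) := by
    intro x
    rw [prod_fiber_pow f (fun q => Complex.exp (2 * Real.pi * Complex.I * (x q))),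
      prod_fiber_pow g (fun q => (starRingEnd ℂ) (Complex.exp (2 * Real.pi * Complex.I * (x q)))),
      ← Finset.prod_mul_distrib]
    exact Finset.prod_congr rfl fun q _ => pow_conj_pow _ _ _
  simp_rw [hrw]
  rw [stPi, pi_integral_prod stMeasure (fun q y => Complex.exp (2 * Real.pi * Complex.I *
        (((Finset.univ.filter fun j => f j = q).card : ℤ) -
          ((Finset.univ.filter fun j => g j = q).card : ℤ)) * y))]
  have : ∀ q : Fin n, ∫ y, Complex.exp (2 * Real.pi * Complex.I *
        (((Finset.univ.filter fun j => f j = q).card : ℤ) -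
          ((Finset.univ.filter fun j => g j = q).card : ℤ)) * y) ∂stMeasure =
      if (Finset.univ.filter fun j => f j = q).card =
          (Finset.univ.filter fun j => g j = q).card then 1 else 0 := by
    intro q
    have hcast : ∀ y : ℝ, Complex.exp (2 * Real.pi * Complex.I *
        (((Finset.univ.filter fun j => f j = q).card : ℤ) -
          ((Finset.univ.filter fun j => g j = q).card : ℤ)) * y) =
        Complex.exp (2 * Real.pi * Complex.I *
        ((((Finset.univ.filter fun j => f j = q).card : ℤ) -
          ((Finset.univ.filter fun j => g j = q).card : ℤ) : ℤ) : ℂ) * y) := by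
      intro y; push_cast; ring_nf
    simp_rw [hcast]
    rw [stMeasure, steinhaus_integral]
    simp [sub_eq_zero]
  simp_rw [this]
  rw [Finset.prod_boole]
  simp

lemma sum_pow_expand {n k : ℕ} (z : Fin n → ℂ) :
    (∑ q, z q) ^ k = ∑ f : Fin k → Fin n, ∏ j, z (f j) := by
  classical
  calc (∑ q, z q) ^ k = ∏ _j : Fin k, (∑ q, z q) := by
        rw [Finset.prod_const, Finset.card_univ, Fintype.card_fin]
    _ = ∑ p ∈ Fintype.piFinset (fun _ : Fin k => Finset.univ), ∏ j, z (p j) :=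
        Finset.prod_univ_sum _ _
    _ = ∑ f : Fin k → Fin n, ∏ j, z (f j) := by rw [Fintype.piFinset_univ]

lemma term_continuous {n k : ℕ} (f g : Fin k → Fin n) :
    Continuous (fun x : Fin n → ℝ =>
      (∏ j, Complex.exp (2 * Real.pi * Complex.I * (x (f j)))) *
        ∏ j, (starRingEnd ℂ) (Complex.exp (2 * Real.pi * Complex.I * (x (g j))))) := by
  have he : ∀ q : Fin n, Continuous (fun x : Fin n → ℝ =>
      Complex.exp (2 * Real.pi * Complex.I * (x q))) := fun q =>
    Complex.continuous_exp.comp (continuous_const.mul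
      (Complex.continuous_ofReal.comp (continuous_apply q)))
  exact (continuous_finset_prod _ fun j _ => he (f j)).mul
    (continuous_finset_prod _ fun j _ => Complex.continuous_conj.comp (he (g j)))

lemma term_norm {n k : ℕ} (f g : Fin k → Fin n) (x : Fin n → ℝ) :
    ‖(∏ j, Complex.exp (2 * Real.pi * Complex.I * (x (f j)))) *
        ∏ j, (starRingEnd ℂ) (Complex.exp (2 * Real.pi * Complex.I * (x (g j))))‖ = 1 := by
  rw [norm_mul, norm_prod, norm_prod]
  simp [norm_steinhaus, Complex.norm_conj]

lemma term_integrable {n k : ℕ} (f g : Fin k → Fin n) :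
    Integrable (fun x : Fin n → ℝ =>
      (∏ j, Complex.exp (2 * Real.pi * Complex.I * (x (f j)))) *
        ∏ j, (starRingEnd ℂ) (Complex.exp (2 * Real.pi * Complex.I * (x (g j)))))
      (stPi n) := by
  refine (integrable_const (1:ℝ)).mono'
    (term_continuous f g).aestronglyMeasurable ?_
  filter_upwards with x
  rw [term_norm]

lemma moment_le (n k : ℕ) :
    ∫ x : Fin n → ℝ, ‖∑ q, Complex.exp (2 * Real.pi * Complex.I * (x q))‖ ^ (2 * k)
        ∂(stPi n) ≤ (k.factorial * n ^ k : ℝ) := by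
  classical
  set g : (Fin n → ℝ) → ℂ := fun x => ∑ q, Complex.exp (2 * Real.pi * Complex.I * (x q)) with hg
  have hpt : ∀ x : Fin n → ℝ, ((‖g x‖ ^ (2 * k) : ℝ) : ℂ) =
      ∑ f : Fin k → Fin n, ∑ g' : Fin k → Fin n,
        (∏ j, Complex.exp (2 * Real.pi * Complex.I * (x (f j)))) *
          ∏ j, (starRingEnd ℂ) (Complex.exp (2 * Real.pi * Complex.I * (x (g' j)))) := by
    intro x
    have h1 : ((‖g x‖ ^ (2 * k) : ℝ) : ℂ) = (g x) ^ k * ((starRingEnd ℂ) (g x)) ^ k := by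
      rw [← mul_pow, Complex.mul_conj, pow_mul]
      rw [Complex.normSq_eq_norm_sq]
      push_cast
      ring
    rw [h1]
    have h2 : (g x) ^ k = ∑ f : Fin k → Fin n,
        ∏ j, Complex.exp (2 * Real.pi * Complex.I * (x (f j))) :=
      sum_pow_expand _
    have h3 : ((starRingEnd ℂ) (g x)) ^ k = ∑ g' : Fin k → Fin n,
        ∏ j, (starRingEnd ℂ) (Complex.exp (2 * Real.pi * Complex.I * (x (g' j)))) := by
      rw [hg, map_sum]
      exact sum_pow_expand _
    rw [h2, h3, Finset.sum_mul_sum]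
  have hint : ((∫ x, ‖g x‖ ^ (2 * k) ∂(stPi n) : ℝ) : ℂ) =
      ∑ f : Fin k → Fin n, ∑ g' : Fin k → Fin n,
        (if (∀ q, (Finset.univ.filter fun j => f j = q).card =
          (Finset.univ.filter fun j => g' j = q).card) then (1:ℂ) else 0) := by
    rw [← integral_complex_ofReal]
    simp_rw [hpt]
    rw [integral_finset_sum _ fun f _ => integrable_finset_sum _ fun g' _ => term_integrable f g']
    refine Finset.sum_congr rfl fun f _ => ?_
    rw [integral_finset_sum _ fun g' _ => term_integrable f g']
    exact Finset.sum_congr rfl fun g' _ => term_integral f g'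
  have hcount : ∑ f : Fin k → Fin n, ∑ g' : Fin k → Fin n,
        (if (∀ q, (Finset.univ.filter fun j => f j = q).card =
          (Finset.univ.filter fun j => g' j = q).card) then (1:ℂ) else 0) =
      (((Finset.univ : Finset ((Fin k → Fin n) × (Fin k → Fin n))).filter fun p =>
        ∀ q, (Finset.univ.filter fun j => p.1 j = q).card =
          (Finset.univ.filter fun j => p.2 j = q).card).card : ℂ) := by
    rw [← Finset.sum_product', Finset.univ_product_univ, Finset.sum_boole]
  rw [hcount] at hint
  have h4 : ∫ x, ‖g x‖ ^ (2 * k) ∂(stPi n) =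
      ((((Finset.univ : Finset ((Fin k → Fin n) × (Fin k → Fin n))).filter fun p =>
        ∀ q, (Finset.univ.filter fun j => p.1 j = q).card =
          (Finset.univ.filter fun j => p.2 j = q).card).card : ℕ) : ℝ) := by
    exact_mod_cast hint
  rw [h4]
  exact_mod_cast card_pairs_le k n

lemma g_continuous (n : ℕ) : Continuous (fun x : Fin n → ℝ =>
    ∑ q, Complex.exp (2 * Real.pi * Complex.I * (x q))) :=
  continuous_finset_sum _ fun q _ => Complex.continuous_exp.comp (continuous_const.mul
    (Complex.continuous_ofReal.comp (continuous_apply q)))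

lemma g_norm_le (n : ℕ) (x : Fin n → ℝ) :
    ‖∑ q, Complex.exp (2 * Real.pi * Complex.I * (x q))‖ ≤ n := by
  calc ‖∑ q, Complex.exp (2 * Real.pi * Complex.I * (x q))‖
      ≤ ∑ q : Fin n, ‖Complex.exp (2 * Real.pi * Complex.I * (x q))‖ := norm_sum_le _ _
    _ = n := by simp [norm_steinhaus]

lemma pow_integrable (n k : ℕ) :
    Integrable (fun x : Fin n → ℝ =>
      ‖∑ q, Complex.exp (2 * Real.pi * Complex.I * (x q))‖ ^ (2 * k)) (stPi n) := by
  refine (integrable_const ((n : ℝ) ^ (2 * k))).mono'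
    (((g_continuous n).norm.pow (2 * k)).aestronglyMeasurable) ?_
  filter_upwards with x
  rw [Real.norm_eq_abs, _root_.abs_of_nonneg (by positivity)]
  exact pow_le_pow_left₀ (norm_nonneg _) (g_norm_le n x) _

lemma mgf_le (n : ℕ) (hn : 1 ≤ n) :
    ∫⁻ x, ENNReal.ofReal (Real.exp
        (‖∑ q, Complex.exp (2 * Real.pi * Complex.I * (x q))‖ ^ 2 / (2 * n))) ∂(stPi n)
      ≤ 2 := by
  classical
  set g : (Fin n → ℝ) → ℂ := fun x => ∑ q, Complex.exp (2 * Real.pi * Complex.I * (x q)) with hg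
  have hexp : ∀ x : Fin n → ℝ, ENNReal.ofReal (Real.exp (‖g x‖ ^ 2 / (2 * n))) =
      ∑' k : ℕ, ENNReal.ofReal ((‖g x‖ ^ 2 / (2 * n)) ^ k / k.factorial) := by
    intro x
    rw [Real.exp_eq_exp_ℝ, NormedSpace.exp_eq_tsum_div]
    exact ENNReal.ofReal_tsum_of_nonneg (fun k => by positivity)
      (Real.summable_pow_div_factorial _)
  refine (lintegral_congr hexp).trans_le ?_
  have hmeasall : ∀ k : ℕ, AEMeasurable (fun x : Fin n → ℝ =>
      ENNReal.ofReal ((‖g x‖ ^ 2 / (2 * (n:ℝ))) ^ k / (k.factorial : ℝ))) (stPi n) := by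
    intro k
    apply Measurable.aemeasurable
    exact ENNReal.measurable_ofReal.comp
      ((((((g_continuous n).norm.pow 2).div_const (2*(n:ℝ))).pow k).div_const
        (k.factorial : ℝ)).measurable)
  rw [lintegral_tsum hmeasall]
  have hterm : ∀ k : ℕ, ∫⁻ x, ENNReal.ofReal ((‖g x‖ ^ 2 / (2 * n)) ^ k / k.factorial) ∂(stPi n)
      ≤ (2 : ℝ≥0∞)⁻¹ ^ k := by
    intro k
    have hc : ∀ x : Fin n → ℝ, (‖g x‖ ^ 2 / (2 * n)) ^ k / k.factorial =
        (1 / ((2 * n) ^ k * k.factorial)) * ‖g x‖ ^ (2 * k) := by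
      intro x
      rw [div_pow, pow_mul]
      field_simp
    simp_rw [hc]
    have hcnn : (0:ℝ) ≤ 1 / ((2 * (n:ℝ)) ^ k * k.factorial) := by positivity
    simp_rw [ENNReal.ofReal_mul hcnn]
    rw [lintegral_const_mul' _ _ ENNReal.ofReal_ne_top,
      ← ofReal_integral_eq_lintegral_ofReal (pow_integrable n k)
        (Filter.Eventually.of_forall fun x => by positivity)]
    calc ENNReal.ofReal (1 / ((2 * (n:ℝ)) ^ k * k.factorial)) *
          ENNReal.ofReal (∫ x, ‖∑ q, Complex.exp (2 * Real.pi * Complex.I * (x q))‖ ^ (2 * k)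
            ∂(stPi n))
        ≤ ENNReal.ofReal (1 / ((2 * (n:ℝ)) ^ k * k.factorial)) *
          ENNReal.ofReal ((k.factorial * n ^ k : ℝ)) :=
          mul_le_mul_right (ENNReal.ofReal_le_ofReal (moment_le n k)) _
      _ = ENNReal.ofReal ((1 / ((2 * (n:ℝ)) ^ k * k.factorial)) * (k.factorial * n ^ k)) :=
          (ENNReal.ofReal_mul hcnn).symm
      _ = (2:ℝ≥0∞)⁻¹ ^ k := by
          have hn0 : (n:ℝ) ≠ 0 := by
            positivity
          have hk0 : (k.factorial : ℝ) ≠ 0 := by exact_mod_cast k.factorial_ne_zero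
          have heq : (1 / ((2 * (n:ℝ)) ^ k * k.factorial)) * (k.factorial * n ^ k) =
              (2:ℝ)⁻¹ ^ k := by
            rw [mul_pow]
            field_simp
            rw [← mul_pow]; norm_num
          rw [heq, ENNReal.ofReal_pow (by norm_num),
            ENNReal.ofReal_inv_of_pos (by norm_num)]
          norm_num
  calc ∑' k : ℕ, ∫⁻ x, ENNReal.ofReal ((‖g x‖ ^ 2 / (2 * (n:ℝ))) ^ k / k.factorial) ∂(stPi n)
      ≤ ∑' k : ℕ, (2:ℝ≥0∞)⁻¹ ^ k := ENNReal.tsum_le_tsum hterm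
    _ = (1 - 2⁻¹)⁻¹ := ENNReal.tsum_geometric _
    _ = 2 := by rw [ENNReal.one_sub_inv_two]; exact inv_inv (2:ℝ≥0∞)


/-- Complex Bernstein inequality for Steinhaus variables: if
`ε_q = e^{2πiθ_q}` with `θ_q` independent and uniform on `[0,1)`, then
`ℙ(|Σ ε_q| ≥ nu) ≤ 2 exp(−nu²/2)` for every `u > 0`. -/
theorem complex_bernstein (n : ℕ) (Ω : Type*) [MeasureSpace Ω]
    [IsProbabilityMeasure (ℙ : Measure Ω)] (θ : Fin n → Ω → ℝ)
    (hmeas : ∀ q, Measurable (θ q))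
    (hindep : iIndepFun θ ℙ)
    (hunif : ∀ q, Measure.map (θ q) ℙ = volume.restrict (Set.Ico (0 : ℝ) 1))
    (u : ℝ) (hu : 0 < u) :
    ℙ {ω | (n : ℝ) * u ≤ ‖
        (∑ q, Complex.exp (2 * Real.pi * Complex.I * (θ q ω)))‖} ≤
      ENNReal.ofReal (2 * Real.exp (-(n : ℝ) * u ^ 2 / 2)) := by
  rcases Nat.eq_zero_or_pos n with hn | hn
  · subst hn
    have h2 : ENNReal.ofReal (2 * Real.exp (-(0 : ℕ) * u ^ 2 / 2)) = 2 := by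
      norm_num
    rw [h2]
    calc ℙ _ ≤ 1 := prob_le_one
      _ ≤ 2 := one_le_two
  · -- main case
    set T : Ω → (Fin n → ℝ) := fun ω q => θ q ω with hT
    have hTmeas : Measurable T := measurable_pi_lambda _ hmeas
    have hmap : Measure.map T ℙ = stPi n := by
      refine (Measure.pi_eq fun s hs => ?_).symm
      rw [Measure.map_apply hTmeas (MeasurableSet.univ_pi hs)]
      have hpre : T ⁻¹' (Set.univ.pi s) = ⋂ q, θ q ⁻¹' s q := by
        ext ω
        simp [Set.mem_pi, Set.mem_iInter, hT]
      rw [hpre]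
      have hsingle : ∀ q : Fin n, stMeasure (s q) = ℙ (θ q ⁻¹' s q) := fun q => by
        rw [stMeasure, ← hunif q, Measure.map_apply (hmeas q) (hs q)]
      have hinter := hindep.measure_inter_preimage_eq_mul Finset.univ
        (sets := s) (fun q _ => hs q)
      have hU : (⋂ q, θ q ⁻¹' s q) = ⋂ q ∈ Finset.univ, θ q ⁻¹' s q := by simp
      rw [hU, hinter]
      exact Finset.prod_congr rfl fun q _ => (hsingle q).symm
    set G : (Fin n → ℝ) → ℝ≥0∞ := fun x => ENNReal.ofReal (Real.exp
      (‖∑ q, Complex.exp (2 * Real.pi * Complex.I * (x q))‖ ^ 2 / (2 * n))) with hG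
    have hGmeas : Measurable G :=
      (ENNReal.continuous_ofReal.comp (Real.continuous_exp.comp
        (((g_continuous n).norm.pow 2).div_const _))).measurable
    have hlint : ∫⁻ ω, G (T ω) ∂ℙ ≤ 2 := by
      rw [← lintegral_map hGmeas hTmeas, hmap]
      exact mgf_le n hn
    have hεpos : (0:ℝ) < Real.exp ((n:ℝ) * u ^ 2 / 2) := Real.exp_pos _
    set ε : ℝ≥0∞ := ENNReal.ofReal (Real.exp ((n:ℝ) * u ^ 2 / 2)) with hε
    have hsub : {ω | (n : ℝ) * u ≤ ‖
        (∑ q, Complex.exp (2 * Real.pi * Complex.I * (θ q ω)))‖} ⊆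
        {ω | ε ≤ G (T ω)} := by
      intro ω hω
      simp only [Set.mem_setOf_eq] at hω ⊢
      rw [hG, hε]
      apply ENNReal.ofReal_le_ofReal
      apply Real.exp_le_exp.mpr
      have hZ : ∑ q, Complex.exp (2 * Real.pi * Complex.I * ((T ω q : ℝ) : ℂ)) =
          ∑ q, Complex.exp (2 * Real.pi * Complex.I * ((θ q ω : ℝ) : ℂ)) := rfl
      rw [hZ]
      have hsq : ((n:ℝ) * u) ^ 2 ≤
          ‖∑ q, Complex.exp (2 * Real.pi * Complex.I * ((θ q ω : ℝ) : ℂ))‖ ^ 2 := by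
        apply pow_le_pow_left₀ (by positivity) hω
      have hn0 : (0:ℝ) < (n:ℝ) := by exact_mod_cast hn
      calc (n:ℝ) * u ^ 2 / 2 = ((n:ℝ) * u) ^ 2 / (2 * n) := by
            field_simp
        _ ≤ _ := by gcongr
    have hε0 : ε ≠ 0 := (ENNReal.ofReal_pos.mpr hεpos).ne'
    have hεtop : ε ≠ ⊤ := ENNReal.ofReal_ne_top
    calc ℙ {ω | (n : ℝ) * u ≤ ‖
            (∑ q, Complex.exp (2 * Real.pi * Complex.I * (θ q ω)))‖}
        ≤ ℙ {ω | ε ≤ G (T ω)} := measure_mono hsub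
      _ ≤ (∫⁻ ω, G (T ω) ∂ℙ) / ε :=
          meas_ge_le_lintegral_div (hGmeas.comp hTmeas).aemeasurable hε0 hεtop
      _ ≤ 2 / ε := by gcongr
      _ = ENNReal.ofReal (2 * Real.exp (-(n : ℝ) * u ^ 2 / 2)) := by
          rw [hε, show ((2:ℝ≥0∞)) = ENNReal.ofReal (2:ℝ) by norm_num,
            ← ENNReal.ofReal_div_of_pos hεpos]
          congr 1
          rw [div_eq_mul_inv, ← Real.exp_neg]
          congr 1
          ring
end

section
/- Khintchine moment bound: let ε_1,...,ε_n be independent Rademacher (±1 with equal probability) random variables and c_1,...,c_n ∈ ℝ. Then for every positive integer z, E[|Σ_q ε_q c_q|^{2z}] ≤ ‖c‖₂^{2z} · (2z)!/(2^z z!), the right-hand side being ‖c‖₂^{2z} times the 2z-th moment of a standard Gaussian. -/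
open Complex MeasureTheory ProbabilityTheory
open Finset

section KMBHelpers


lemma kmb_fact (m : ℕ) : 2 ^ m * m.factorial ≤ (2 * m).factorial := by
  induction m with
  | zero => simp
  | succ m ih =>
    have h : 2 * (m + 1) = (2 * m + 1) + 1 := by ring
    rw [h, Nat.factorial_succ, Nat.factorial_succ]
    calc 2 ^ (m + 1) * ((m + 1) * m.factorial)
        = (m + 1) * (1 * (2 ^ m * m.factorial)) * 2 := by ring
      _ ≤ (m + 1) * ((2 * m + 1) * (2 * m).factorial) * 2 := by
          gcongr
          · exact Nat.one_le_iff_ne_zero.2 (by omega)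
      _ = (2 * m + 1 + 1) * ((2 * m + 1) * (2 * m).factorial) := by ring

lemma kmb_multinomial {n z : ℕ} (a : Fin n → ℕ) (ha : ∑ q, a q = z) :
    Nat.multinomial univ (fun q => 2 * a q) * (2 ^ z * z.factorial) ≤
      (2 * z).factorial * Nat.multinomial univ a := by
  have h1 := Nat.multinomial_spec univ (fun q => 2 * a q)
  have h2 := Nat.multinomial_spec univ a
  rw [← Finset.mul_sum, ha] at h1
  rw [ha] at h2
  set P := ∏ q, (a q).factorial with hP
  have hPpos : 0 < P := Finset.prod_pos fun i _ => (a i).factorial_pos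
  have hprod : 2 ^ z * P ≤ ∏ q, (2 * a q).factorial := by
    rw [hP, ← ha, ← Finset.prod_pow_eq_pow_sum, ← Finset.prod_mul_distrib]
    exact Finset.prod_le_prod' fun i _ => kmb_fact (a i)
  refine Nat.le_of_mul_le_mul_left ?_ hPpos
  calc P * (Nat.multinomial univ (fun q => 2 * a q) * (2 ^ z * z.factorial))
      = (2 ^ z * P) * Nat.multinomial univ (fun q => 2 * a q) * z.factorial := by ring
    _ ≤ (∏ q, (2 * a q).factorial) * Nat.multinomial univ (fun q => 2 * a q) * z.factorial := by
        gcongr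
    _ = (2 * z).factorial * z.factorial := by rw [h1]
    _ = P * ((2 * z).factorial * Nat.multinomial univ a) := by rw [← h2]; ring


variable {n : ℕ} {Ω : Type*} [MeasureSpace Ω] [IsProbabilityMeasure (ℙ : Measure Ω)]
  (ε : Fin n → Ω → ℝ)

lemma kmb_ae (hmeas : ∀ q, Measurable (ε q))
    (hlaw : ∀ q, Measure.map (ε q) ℙ =
      (1 / 2 : ENNReal) • Measure.dirac (1 : ℝ) +
        (1 / 2 : ENNReal) • Measure.dirac (-1 : ℝ)) (q : Fin n) :
    ∀ᵐ ω ∂(ℙ : Measure Ω), ε q ω = 1 ∨ ε q ω = -1 := by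
  have hs : MeasurableSet {x : ℝ | x = 1 ∨ x = -1} := by
    have h : {x : ℝ | x = 1 ∨ x = -1} = {1} ∪ {-1} := by ext x; simp [or_comm]
    rw [h]; exact (measurableSet_singleton _).union (measurableSet_singleton _)
  rw [← MeasureTheory.ae_map_iff (hmeas q).aemeasurable hs, hlaw q]
  rw [ae_iff]
  have hsc : MeasurableSet {a : ℝ | ¬(a = 1 ∨ a = -1)} := hs.compl
  simp only [Measure.add_apply, Measure.smul_apply, smul_eq_mul]
  rw [Measure.dirac_apply' _ hsc, Measure.dirac_apply' _ hsc]
  simp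

lemma kmb_moment (hmeas : ∀ q, Measurable (ε q))
    (hlaw : ∀ q, Measure.map (ε q) ℙ =
      (1 / 2 : ENNReal) • Measure.dirac (1 : ℝ) +
        (1 / 2 : ENNReal) • Measure.dirac (-1 : ℝ)) (q : Fin n) (k : ℕ) :
    ∫ ω, ε q ω ^ k ∂(ℙ : Measure Ω) = if Even k then 1 else 0 := by
  have hmap := integral_map (μ := ℙ) (φ := ε q) (f := fun x : ℝ => x ^ k)
    (hmeas q).aemeasurable ((measurable_id.pow_const k).aestronglyMeasurable)
  rw [← hmap, hlaw q]
  have hi : ∀ a : ℝ, Integrable (fun x : ℝ => x ^ k) ((1/2 : ENNReal) • Measure.dirac a) := by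
    intro a
    refine Integrable.smul_measure ?_ (by norm_num)
    refine (integrable_const (a ^ k)).congr ?_
    rw [MeasureTheory.ae_dirac_eq]
    exact Filter.eventually_pure.mpr rfl
  rw [integral_add_measure (hi 1) (hi (-1)), integral_smul_measure, integral_smul_measure,
    integral_dirac, integral_dirac]
  rcases Nat.even_or_odd k with h | h
  · simp [h, h.neg_one_pow]
    norm_num
  · simp [h.neg_one_pow, Nat.not_even_iff_odd.2 h]

lemma kmb_prod (hmeas : ∀ q, Measurable (ε q))
    (hindep : iIndepFun ε ℙ) (k : Fin n → ℕ) (s : Finset (Fin n)) :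
    ∫ ω, ∏ q ∈ s, ε q ω ^ k q ∂(ℙ : Measure Ω) = ∏ q ∈ s, ∫ ω, ε q ω ^ k q ∂ℙ := by
  have hind2 : iIndepFun (fun q ω => ε q ω ^ k q) ℙ :=
    hindep.comp (fun q x => x ^ k q) (fun q => measurable_id.pow_const (k q))
  have hm2 : ∀ q, Measurable (fun ω => ε q ω ^ k q) :=
    fun q => (hmeas q).pow_const (k q)
  induction s using Finset.cons_induction with
  | empty => simp
  | cons i s hi ih =>
    simp only [Finset.prod_cons]
    have hpf : (∏ j ∈ s, fun ω => ε j ω ^ k j) = fun ω => ∏ q ∈ s, ε q ω ^ k q := by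
      ext ω; simp
    have hIF : IndepFun (fun ω => ε i ω ^ k i) (fun ω => ∏ q ∈ s, ε q ω ^ k q) ℙ := by
      have h := (hind2.indepFun_finsetProd_of_notMem hm2 hi).symm
      rwa [hpf] at h
    rw [hIF.integral_fun_mul_eq_mul_integral ((hm2 i).aestronglyMeasurable)
      ((Finset.measurable_prod s fun q _ => hm2 q).aestronglyMeasurable), ih]

end KMBHelpers

/-- Khintchine moment bound: for independent Rademacher variables `ε_q` and
real coefficients `c_q`,
`E[|Σ ε_q c_q|^{2z}] ≤ ‖c‖₂^{2z} (2z)!/(2^z z!)`. -/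
theorem khintchine_moment_bound (n : ℕ) (Ω : Type*) [MeasureSpace Ω]
    [IsProbabilityMeasure (ℙ : Measure Ω)] (ε : Fin n → Ω → ℝ)
    (hmeas : ∀ q, Measurable (ε q))
    (hindep : iIndepFun ε ℙ)
    (hlaw : ∀ q, Measure.map (ε q) ℙ =
      (1 / 2 : ENNReal) • Measure.dirac (1 : ℝ) +
        (1 / 2 : ENNReal) • Measure.dirac (-1 : ℝ))
    (c : Fin n → ℝ) (z : ℕ) (hz : 0 < z) :
    ∫ ω, |∑ q, ε q ω * c q| ^ (2 * z) ∂ℙ ≤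
      (Real.sqrt (∑ q, c q ^ 2)) ^ (2 * z) *
        ((Nat.factorial (2 * z) : ℝ) / (2 ^ z * Nat.factorial z)) := by
  classical
  set C : ℝ := (Nat.factorial (2 * z) : ℝ) / (2 ^ z * Nat.factorial z) with hCdef
  have hS0 : (0:ℝ) ≤ ∑ q, c q ^ 2 := Finset.sum_nonneg fun i _ => sq_nonneg _
  have habs : ∀ᵐ ω ∂(ℙ : Measure Ω), ∀ q, |ε q ω| = 1 := by
    have hae := MeasureTheory.ae_all_iff.2 (kmb_ae ε hmeas hlaw)
    filter_upwards [hae] with ω h q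
    rcases h q with h' | h' <;> simp [h']
  have hint : ∀ k : Fin n → ℕ, Integrable (fun ω => ∏ q, (ε q ω * c q) ^ k q) ℙ := by
    intro k
    refine (integrable_const (∏ q, |c q| ^ k q)).mono' ?_ ?_
    · exact (Finset.measurable_prod univ fun q _ =>
        ((hmeas q).mul_const _).pow_const _).aestronglyMeasurable
    · filter_upwards [habs] with ω h
      rw [Real.norm_eq_abs, Finset.abs_prod]
      refine le_of_eq (Finset.prod_congr rfl fun q _ => ?_)
      rw [_root_.abs_pow, _root_.abs_mul, h q, one_mul]
  have heven : Even (2 * z) := even_two_mul z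
  have h1 : ∀ ω, |∑ q, ε q ω * c q| ^ (2 * z) = ∑ k ∈ piAntidiag univ (2 * z),
      (Nat.multinomial univ k : ℝ) * ∏ q, (ε q ω * c q) ^ k q := by
    intro ω
    rw [heven.pow_abs, Finset.sum_pow_eq_sum_piAntidiag]
  simp only [h1]
  rw [MeasureTheory.integral_finset_sum _ (fun k _ => (hint k).const_mul _)]
  have h2 : ∀ k ∈ piAntidiag (univ : Finset (Fin n)) (2 * z),
      ∫ ω, (Nat.multinomial univ k : ℝ) * ∏ q, (ε q ω * c q) ^ k q ∂(ℙ : Measure Ω)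
        = (Nat.multinomial univ k : ℝ) * (∏ q, c q ^ k q) *
            ∏ q, (if Even (k q) then (1:ℝ) else 0) := by
    intro k _
    rw [MeasureTheory.integral_const_mul]
    have hsp : ∀ ω : Ω, ∏ q, (ε q ω * c q) ^ k q
        = (∏ q, c q ^ k q) * ∏ q, ε q ω ^ k q := by
      intro ω
      rw [← Finset.prod_mul_distrib]
      exact Finset.prod_congr rfl fun q _ => by rw [mul_pow]; ring
    simp only [hsp]
    rw [MeasureTheory.integral_const_mul, kmb_prod ε hmeas hindep]
    simp only [kmb_moment ε hmeas hlaw]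
    ring
  rw [Finset.sum_congr rfl h2]
  -- restrict to even multi-indices
  set T := (piAntidiag (univ : Finset (Fin n)) (2 * z)).filter
    (fun k => ∀ q, Even (k q)) with hT
  have h3 : ∑ k ∈ piAntidiag (univ : Finset (Fin n)) (2 * z),
      (Nat.multinomial univ k : ℝ) * (∏ q, c q ^ k q) *
        ∏ q, (if Even (k q) then (1:ℝ) else 0)
      = ∑ k ∈ T, (Nat.multinomial univ k : ℝ) * ∏ q, c q ^ k q := by
    rw [hT, Finset.sum_filter]
    refine Finset.sum_congr rfl fun k _ => ?_
    by_cases h : ∀ q, Even (k q)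
    · rw [if_pos h, Finset.prod_congr rfl (fun q _ => if_pos (h q)), Finset.prod_const_one,
        mul_one]
    · push_neg at h
      obtain ⟨q, hq⟩ := h
      have hz0 : (∏ q, (if Even (k q) then (1:ℝ) else 0)) = 0 :=
        Finset.prod_eq_zero (Finset.mem_univ q) (if_neg hq)
      rw [if_neg (by push_neg; exact ⟨q, hq⟩), hz0, mul_zero]
  rw [h3]
  -- termwise bound
  have h4 : ∀ k ∈ T, (Nat.multinomial univ k : ℝ) * ∏ q, c q ^ k q ≤
      C * ((Nat.multinomial univ (fun q => k q / 2) : ℝ) *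
        ∏ q, (c q ^ 2) ^ (k q / 2)) := by
    intro k hk
    rw [hT, Finset.mem_filter, Finset.mem_piAntidiag] at hk
    obtain ⟨⟨hsum, -⟩, hev⟩ := hk
    set a : Fin n → ℕ := fun q => k q / 2 with ha
    have hka : ∀ q, k q = 2 * a q := fun q => (Nat.two_mul_div_two_of_even (hev q)).symm
    have hsa : ∑ q, a q = z := by
      have : 2 * ∑ q, a q = 2 * z := by
        rw [Finset.mul_sum]; rw [← hsum]; exact Finset.sum_congr rfl fun q _ => (hka q).symm
      omega
    have hprodeq : ∏ q, c q ^ k q = ∏ q, (c q ^ 2) ^ a q := by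
      refine Finset.prod_congr rfl fun q _ => ?_
      rw [hka q, ← pow_mul]
    have hMk : (Nat.multinomial univ k : ℝ) ≤ C * Nat.multinomial univ a := by
      have hnat := kmb_multinomial a hsa
      have hke : k = fun q => 2 * a q := funext hka
      rw [hke]
      rw [hCdef, div_mul_eq_mul_div, le_div_iff₀ (by positivity)]
      calc (Nat.multinomial univ fun q => 2 * a q : ℝ) * (2 ^ z * (Nat.factorial z : ℝ))
          = ((Nat.multinomial univ (fun q => 2 * a q) * (2 ^ z * Nat.factorial z) : ℕ) : ℝ) := by
            push_cast; ring
        _ ≤ (((2 * z).factorial * Nat.multinomial univ a : ℕ) : ℝ) := by exact_mod_cast hnat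
        _ = (Nat.factorial (2 * z) : ℝ) * Nat.multinomial univ a := by push_cast; ring
    have hp0 : (0:ℝ) ≤ ∏ q, (c q ^ 2) ^ a q :=
      Finset.prod_nonneg fun q _ => pow_nonneg (sq_nonneg _) _
    calc (Nat.multinomial univ k : ℝ) * ∏ q, c q ^ k q
        = (Nat.multinomial univ k : ℝ) * ∏ q, (c q ^ 2) ^ a q := by rw [hprodeq]
      _ ≤ (C * Nat.multinomial univ a) * ∏ q, (c q ^ 2) ^ a q := by
          exact mul_le_mul_of_nonneg_right hMk hp0
      _ = C * ((Nat.multinomial univ a : ℝ) * ∏ q, (c q ^ 2) ^ a q) := by ring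
  refine le_trans (Finset.sum_le_sum h4) ?_
  -- re-index sum over T to sum over piAntidiag univ z
  have h5 : ∑ k ∈ T, C * ((Nat.multinomial univ (fun q => k q / 2) : ℝ) *
      ∏ q, (c q ^ 2) ^ (k q / 2))
      = ∑ a ∈ piAntidiag (univ : Finset (Fin n)) z,
          C * ((Nat.multinomial univ a : ℝ) * ∏ q, (c q ^ 2) ^ a q) := by
    refine Finset.sum_nbij' (fun k => fun q => k q / 2) (fun a => fun q => 2 * a q)
      ?_ ?_ ?_ ?_ ?_
    · intro k hk
      rw [hT, Finset.mem_filter, Finset.mem_piAntidiag] at hk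
      obtain ⟨⟨hsum, -⟩, hev⟩ := hk
      rw [Finset.mem_piAntidiag]
      refine ⟨?_, fun i _ => Finset.mem_univ i⟩
      have : 2 * ∑ q, k q / 2 = 2 * z := by
        rw [Finset.mul_sum, ← hsum]
        exact Finset.sum_congr rfl fun q _ => Nat.two_mul_div_two_of_even (hev q)
      exact Nat.eq_of_mul_eq_mul_left (by norm_num) this
    · intro a haa
      rw [Finset.mem_piAntidiag] at haa
      rw [hT, Finset.mem_filter, Finset.mem_piAntidiag]
      exact ⟨⟨by rw [← Finset.mul_sum, haa.1], fun i _ => Finset.mem_univ i⟩,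
        fun q => ⟨a q, by ring⟩⟩
    · intro k hk
      rw [hT, Finset.mem_filter] at hk
      funext q
      exact Nat.two_mul_div_two_of_even (hk.2 q)
    · intro a _
      funext q
      show 2 * a q / 2 = a q
      omega
    · intro k _; rfl
  rw [h5, ← Finset.mul_sum]
  have h6 : ∑ a ∈ piAntidiag (univ : Finset (Fin n)) z,
      (Nat.multinomial univ a : ℝ) * ∏ q, (c q ^ 2) ^ a q = (∑ q, c q ^ 2) ^ z :=
    (Finset.sum_pow_eq_sum_piAntidiag univ (fun q => c q ^ 2) z).symm
  rw [h6]
  have h7 : (Real.sqrt (∑ q, c q ^ 2)) ^ (2 * z) = (∑ q, c q ^ 2) ^ z := by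
    rw [pow_mul, Real.sq_sqrt hS0]
  rw [h7, mul_comm]
end

section
/- Concentration for Rademacher chaos rows: let v ∈ ℝ^N with ‖v‖₂ = 1 and h ∈ ℝ^m with ‖h‖₂ = 1/√m. For p = 1,...,m, let X_p = Σ_{q=1}^N Σ_{ℓ=1}^m ε_ℓ^{pq} h_ℓ v_q with all ε_ℓ^{pq} independent Rademacher variables, and set ‖Av‖₂² = Σ_p X_p². Then for every 0 < ε < 1, ℙ(|‖Av‖₂² − 1| ≥ ε) ≤ 2 exp(−(m/2)(ε²/2 − ε³/3)). -/
open Complex MeasureTheory ProbabilityTheory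

namespace RCC

open Finset Real MeasureTheory ProbabilityTheory
open scoped Classical

def sgn (b : Bool) : ℝ := if b then 1 else -1

@[simp] lemma sgn_not (b : Bool) : sgn (!b) = - sgn b := by cases b <;> simp [sgn]
@[simp] lemma sgn_sq (b : Bool) : sgn b ^ 2 = 1 := by cases b <;> simp [sgn]

section Discrete

variable {ι : Type*} [Fintype ι] [DecidableEq ι]

/-- normalized expectation over sign patterns -/
noncomputable def E (f : (ι → Bool) → ℝ) : ℝ :=
  (∑ s : ι → Bool, f s) / 2 ^ (Fintype.card ι)

lemma E_const (a : ℝ) : E (fun _ : ι → Bool => a) = a := by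
  simp only [E, Finset.sum_const, card_univ, nsmul_eq_mul]
  rw [Fintype.card_fun]
  push_cast
  rw [Fintype.card_bool]
  field_simp
  push_cast; ring

lemma E_mono {f g : (ι → Bool) → ℝ} (h : ∀ s, f s ≤ g s) : E f ≤ E g := by
  apply div_le_div_of_nonneg_right (Finset.sum_le_sum (fun s _ => h s)) (by positivity)

lemma E_nonneg {f : (ι → Bool) → ℝ} (h : ∀ s, 0 ≤ f s) : 0 ≤ E f := by
  have := E_mono (f := fun _ : ι → Bool => (0:ℝ)) (g := f) h
  rwa [E_const 0] at this

lemma E_add (f g : (ι → Bool) → ℝ) : E (fun s => f s + g s) = E f + E g := by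
  simp [E, Finset.sum_add_distrib, add_div]

lemma E_smul (a : ℝ) (f : (ι → Bool) → ℝ) : E (fun s => a * f s) = a * E f := by
  simp [E, ← Finset.mul_sum, mul_div_assoc]

lemma E_prod (g : ι → Bool → ℝ) :
    E (fun s => ∏ i, g i (s i)) = ∏ i, ((g i true + g i false) / 2) := by
  have key : (∑ s : ι → Bool, ∏ i, g i (s i)) = ∏ i, (g i true + g i false) := by
    have := Finset.prod_univ_sum (fun _ : ι => (Finset.univ : Finset Bool)) (fun i b => g i b)
    rw [Fintype.piFinset_univ] at this
    rw [← this]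
    congr 1
    ext i
    simp [Fintype.sum_bool]
  rw [E, key, Finset.prod_div_distrib]
  simp

def flip (j : ι) (s : ι → Bool) : ι → Bool := Function.update s j (!s j)

lemma flip_invol (j : ι) : Function.Involutive (flip (ι := ι) j) := by
  intro s
  ext i
  by_cases hi : i = j
  · subst hi; simp [flip]
  · simp [flip, Function.update_of_ne hi]

lemma sum_flip (j : ι) (f : (ι → Bool) → ℝ) :
    ∑ s : ι → Bool, f s = ∑ s : ι → Bool, f (flip j s) :=
  (Fintype.sum_equiv ((flip_invol j).toPerm _) _ _ (fun _ => rfl)).symm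

lemma flip_apply_self (j : ι) (s : ι → Bool) : (flip j s) j = !s j := by
  simp [flip]

lemma flip_apply_ne (j : ι) (s : ι → Bool) {i : ι} (h : i ≠ j) : (flip j s) i = s i := by
  simp [flip, Function.update_of_ne h]

/-- splitting a sum at one coordinate -/
lemma sum_split (j : ι) (F : Finset ι) (hj : j ∉ F) (c : ι → ℝ) (G : ℝ → ℝ → ℝ) :
    ∑ s : ι → Bool, G (∑ i ∈ F, c i * sgn (s i)) (sgn (s j))
      = (∑ s : ι → Bool, (G (∑ i ∈ F, c i * sgn (s i)) (sgn (s j))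
          + G (∑ i ∈ F, c i * sgn (s i)) (- sgn (s j)))) / 2 := by
  have h1 := sum_flip j (fun s => G (∑ i ∈ F, c i * sgn (s i)) (sgn (s j)))
  have h2 : ∀ s : ι → Bool,
      G (∑ i ∈ F, c i * sgn ((flip j s) i)) (sgn ((flip j s) j))
        = G (∑ i ∈ F, c i * sgn (s i)) (- sgn (s j)) := by
    intro s
    rw [flip_apply_self, sgn_not]
    congr 1
    apply Finset.sum_congr rfl
    intro i hi
    rw [flip_apply_ne j s (fun h => hj (h ▸ hi))]
  rw [eq_div_iff (by norm_num : (2:ℝ) ≠ 0), Finset.sum_add_distrib, mul_two]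
  congr 1
  rw [h1]
  exact Finset.sum_congr rfl (fun s _ => h2 s)

lemma card_bool_fun : (Fintype.card (ι → Bool) : ℝ) = 2 ^ (Fintype.card ι) := by
  simp [Fintype.card_fun]

lemma sum_sq (c : ι → ℝ) (F : Finset ι) :
    ∑ s : ι → Bool, (∑ i ∈ F, c i * sgn (s i)) ^ 2
      = 2 ^ (Fintype.card ι) * ∑ i ∈ F, c i ^ 2 := by
  induction F using Finset.induction with
  | empty => simp
  | insert _ _ hj =>
    rename_i j F ih
    have hs : ∀ s : ι → Bool, ∑ i ∈ insert j F, c i * sgn (s i)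
        = (∑ i ∈ F, c i * sgn (s i)) + c j * sgn (s j) := by
      intro s; rw [Finset.sum_insert hj]; ring
    simp only [hs]
    have key := sum_split j F hj c (fun y e => (y + c j * e) ^ 2)
    rw [key]
    have pt : ∀ s : ι → Bool,
        ((∑ i ∈ F, c i * sgn (s i)) + c j * sgn (s j)) ^ 2
          + ((∑ i ∈ F, c i * sgn (s i)) + c j * -sgn (s j)) ^ 2
        = 2 * ((∑ i ∈ F, c i * sgn (s i)) ^ 2 + c j ^ 2) := by
      intro s
      have e2 : sgn (s j) = 1 ∨ sgn (s j) = -1 := by cases s j <;> simp [sgn]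
      rcases e2 with e2 | e2 <;> rw [e2] <;> ring
    rw [Finset.sum_congr rfl (fun s _ => pt s), ← Finset.mul_sum]
    rw [Finset.sum_add_distrib, ih, Finset.sum_const, Finset.sum_insert hj]
    simp only [nsmul_eq_mul, card_univ]
    rw [card_bool_fun]
    ring

lemma sum_pow4 (c : ι → ℝ) (F : Finset ι) :
    ∑ s : ι → Bool, (∑ i ∈ F, c i * sgn (s i)) ^ 4
      ≤ 2 ^ (Fintype.card ι) * (3 * (∑ i ∈ F, c i ^ 2) ^ 2) := by
  induction F using Finset.induction with
  | empty => simp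
  | insert _ _ hj =>
    rename_i j F ih
    have hs : ∀ s : ι → Bool, ∑ i ∈ insert j F, c i * sgn (s i)
        = (∑ i ∈ F, c i * sgn (s i)) + c j * sgn (s j) := by
      intro s; rw [Finset.sum_insert hj]; ring
    simp only [hs]
    have key := sum_split j F hj c (fun y e => (y + c j * e) ^ 4)
    rw [key]
    have pt : ∀ s : ι → Bool,
        ((∑ i ∈ F, c i * sgn (s i)) + c j * sgn (s j)) ^ 4
          + ((∑ i ∈ F, c i * sgn (s i)) + c j * -sgn (s j)) ^ 4
        = 2 * ((∑ i ∈ F, c i * sgn (s i)) ^ 4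
            + 6 * c j ^ 2 * (∑ i ∈ F, c i * sgn (s i)) ^ 2 + c j ^ 4) := by
      intro s
      have e2 : sgn (s j) = 1 ∨ sgn (s j) = -1 := by cases s j <;> simp [sgn]
      rcases e2 with e2 | e2 <;> rw [e2] <;> ring
    rw [Finset.sum_congr rfl (fun s _ => pt s), ← Finset.mul_sum]
    have expand : ∑ s : ι → Bool, ((∑ i ∈ F, c i * sgn (s i)) ^ 4
            + 6 * c j ^ 2 * (∑ i ∈ F, c i * sgn (s i)) ^ 2 + c j ^ 4)
        = (∑ s : ι → Bool, (∑ i ∈ F, c i * sgn (s i)) ^ 4)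
          + 6 * c j ^ 2 * (2 ^ (Fintype.card ι) * ∑ i ∈ F, c i ^ 2)
          + 2 ^ (Fintype.card ι) * c j ^ 4 := by
      rw [Finset.sum_add_distrib, Finset.sum_add_distrib, ← Finset.mul_sum,
        sum_sq c F, Finset.sum_const]
      simp only [nsmul_eq_mul, card_univ]
      rw [card_bool_fun]
    rw [expand, mul_div_cancel_left₀ _ (by norm_num : (2:ℝ) ≠ 0)]
    rw [Finset.sum_insert hj]
    have hF : (0:ℝ) ≤ ∑ i ∈ F, c i ^ 2 := Finset.sum_nonneg (fun i _ => sq_nonneg _)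
    have hP : (0:ℝ) < 2 ^ (Fintype.card ι) := by positivity
    nlinarith [ih, sq_nonneg (c j), hF, hP,
      mul_nonneg hP.le (sq_nonneg (c j ^ 2)),
      mul_nonneg (mul_nonneg hP.le (sq_nonneg (c j))) hF]

end Discrete

section Scalar

lemma quad_le_exp {x : ℝ} (hx : 0 ≤ x) : 1 + x + x ^ 2 / 2 ≤ Real.exp x := by
  have := Real.sum_le_exp_of_nonneg hx 3
  simp [Finset.sum_range_succ, Nat.factorial] at this
  linarith

lemma exp_le_quad {x : ℝ} (hx : x ≤ 0) : Real.exp x ≤ 1 + x + x ^ 2 / 2 := by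
  have H : ∀ y : ℝ, HasDerivAt (fun t : ℝ => 1 + t + t ^ 2 / 2 - Real.exp t)
      (1 + y - Real.exp y) y := by
    intro y
    have h1 : HasDerivAt (fun t : ℝ => 1 + t + t ^ 2 / 2) (1 + y) y := by
      have := (((hasDerivAt_id y).const_add (1:ℝ)).add ((hasDerivAt_pow 2 y).div_const 2))
      exact this.congr_deriv (by push_cast; ring)
    exact h1.sub (Real.hasDerivAt_exp y)
  have hanti : Antitone (fun t : ℝ => 1 + t + t ^ 2 / 2 - Real.exp t) := by
    apply antitone_of_deriv_nonpos
    · exact fun y => (H y).differentiableAt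
    · intro y
      rw [(H y).deriv]
      linarith [Real.add_one_le_exp y]
  have := hanti hx
  simp at this
  linarith

lemma cubic_le_exp (y : ℝ) : 1 + y + y ^ 2 / 2 + y ^ 3 / 6 ≤ Real.exp y := by
  rcases le_or_gt 0 y with hy | hy
  · have := Real.sum_le_exp_of_nonneg hy 4
    simp [Finset.sum_range_succ, Nat.factorial] at this
    linarith
  · have H : ∀ x : ℝ, HasDerivAt (fun t : ℝ => Real.exp t - (1 + t + t ^ 2 / 2 + t ^ 3 / 6))
        (Real.exp x - (1 + x + x ^ 2 / 2)) x := by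
      intro x
      have h1 : HasDerivAt (fun t : ℝ => 1 + t + t ^ 2 / 2 + t ^ 3 / 6)
          (1 + x + x ^ 2 / 2) x := by
        have := ((((hasDerivAt_id x).const_add (1:ℝ)).add
          ((hasDerivAt_pow 2 x).div_const 2)).add ((hasDerivAt_pow 3 x).div_const 6))
        exact this.congr_deriv (by push_cast; ring)
      exact (Real.hasDerivAt_exp x).sub h1
    have hanti : AntitoneOn (fun t : ℝ => Real.exp t - (1 + t + t ^ 2 / 2 + t ^ 3 / 6))
        (Set.Iic 0) := by
      apply antitoneOn_of_deriv_nonpos (convex_Iic 0)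
      · exact Continuous.continuousOn (by fun_prop)
      · intro x _
        exact (H x).differentiableAt.differentiableWithinAt
      · intro x hx
        rw [(H x).deriv]
        rw [interior_Iic] at hx
        linarith [exp_le_quad (le_of_lt hx)]
    have := hanti (Set.mem_Iic.2 hy.le) (Set.mem_Iic.2 le_rfl) hy.le
    simp at this
    linarith

lemma S1 {x : ℝ} (h0 : 0 ≤ x) (h1 : x ≤ 1) :
    1 + x ≤ Real.exp (x - x ^ 2 / 2 + x ^ 3 / 3) := by
  set r := x - x ^ 2 / 2 + x ^ 3 / 3 with hr
  have hc := cubic_le_exp r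
  have hx2 : x ^ 2 ≤ 1 := pow_le_one₀ h0 h1
  have hx4 : x ^ 4 ≤ 1 := pow_le_one₀ h0 h1
  have hx3 : 0 ≤ x ^ 3 := pow_nonneg h0 3
  have hx5 : 0 ≤ x ^ 5 := pow_nonneg h0 5
  have q1 : (0:ℝ) ≤ 5/24 + x/8 - 19/144 * x^2 + 7/72 * x^3 - x^4/36 + x^5/162 := by
    linarith
  have expand : r ^ 2 / 2 + r ^ 3 / 6 + x ^ 3 / 3 - x ^ 2 / 2
      = x ^ 4 * (5/24 + x/8 - 19/144 * x^2 + 7/72 * x^3 - x^4/36 + x^5/162) := by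
    rw [hr]; ring
  have hfin : (0:ℝ) ≤ x ^ 4 * (5/24 + x/8 - 19/144 * x^2 + 7/72 * x^3 - x^4/36 + x^5/162) :=
    mul_nonneg (pow_nonneg h0 4) q1
  linarith

lemma S2 {x : ℝ} (h0 : 0 ≤ x) (h1 : x ≤ 1) :
    1 - x / 2 + 3 * x ^ 2 / 8 ≤ Real.exp (-x / 2 + x ^ 2 / 4 + x ^ 3 / 6) := by
  set s := -x / 2 + x ^ 2 / 4 + x ^ 3 / 6 with hs
  have hc := cubic_le_exp s
  have hx2 : x ^ 2 ≤ 1 := pow_le_one₀ h0 h1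
  have hx3 : x ^ 3 ≤ x ^ 2 := pow_le_pow_of_le_one h0 h1 (by norm_num)
  have hx4 : x ^ 4 ≤ x ^ 3 := pow_le_pow_of_le_one h0 h1 (by norm_num)
  have hx3n : 0 ≤ x ^ 3 := pow_nonneg h0 3
  have hx5 : 0 ≤ x ^ 5 := pow_nonneg h0 5
  have hx6 : 0 ≤ x ^ 6 := pow_nonneg h0 6
  have q2 : (0:ℝ) ≤ 1/48 - x/48 + 3/64 * x^2 - 5/1152 * x^3 - x^4/576 + x^5/288 + x^6/1296 := by
    nlinarith [mul_nonneg h0 (sub_nonneg.2 hx2)]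
  have expand : s + s ^ 2 / 2 + s ^ 3 / 6 + x / 2 - 3 * x ^ 2 / 8
      = x ^ 3 * (1/48 - x/48 + 3/64 * x^2 - 5/1152 * x^3 - x^4/576 + x^5/288 + x^6/1296) := by
    rw [hs]; ring
  have hfin : (0:ℝ) ≤ x ^ 3 *
      (1/48 - x/48 + 3/64 * x^2 - 5/1152 * x^3 - x^4/576 + x^5/288 + x^6/1296) :=
    mul_nonneg hx3n q2
  linarith

end Scalar

section Gaussian

open Real

lemma integrable_g3 (t : ℝ) : Integrable (fun y : ℝ => Real.exp (t * y) * Real.exp (-(y ^ 2) / 2)) := by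
  have heq : (fun y : ℝ => Real.exp (t * y) * Real.exp (-(y ^ 2) / 2))
      = fun y : ℝ => Real.exp (t ^ 2 / 2) * Real.exp (-(1/2) * (y - t) ^ 2) := by
    funext y
    rw [← Real.exp_add, ← Real.exp_add]
    congr 1
    ring
  rw [heq]
  exact ((integrable_exp_neg_mul_sq (by norm_num : (0:ℝ) < 1/2)).comp_sub_right t).const_mul _

lemma integral_g1 (t : ℝ) :
    ∫ y : ℝ, Real.exp (t * y) * Real.exp (-(y ^ 2) / 2) = Real.sqrt (2 * π) * Real.exp (t ^ 2 / 2) := by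
  have heq : (fun y : ℝ => Real.exp (t * y) * Real.exp (-(y ^ 2) / 2))
      = fun y : ℝ => Real.exp (t ^ 2 / 2) * Real.exp (-(1/2) * (y - t) ^ 2) := by
    funext y
    rw [← Real.exp_add, ← Real.exp_add]
    congr 1
    ring
  rw [heq, MeasureTheory.integral_const_mul,
    integral_sub_right_eq_self (μ := volume) (fun y => Real.exp (-(1/2) * y ^ 2)) t, integral_gaussian]
  rw [show π / (1/2 : ℝ) = 2 * π by ring]
  ring

lemma integrable_g2 {a : ℝ} (ha : a < 1/2) :
    Integrable (fun y : ℝ => Real.exp (a * y ^ 2) * Real.exp (-(y ^ 2) / 2)) := by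
  have heq : (fun y : ℝ => Real.exp (a * y ^ 2) * Real.exp (-(y ^ 2) / 2))
      = fun y : ℝ => Real.exp (-(1/2 - a) * y ^ 2) := by
    funext y
    rw [← Real.exp_add]
    congr 1
    ring
  rw [heq]
  exact integrable_exp_neg_mul_sq (by linarith)

lemma integral_g2 {a : ℝ} (ha : a < 1/2) :
    ∫ y : ℝ, Real.exp (a * y ^ 2) * Real.exp (-(y ^ 2) / 2)
      = Real.sqrt (2 * π) * Real.sqrt (1 - 2 * a)⁻¹ := by
  have heq : (fun y : ℝ => Real.exp (a * y ^ 2) * Real.exp (-(y ^ 2) / 2))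
      = fun y : ℝ => Real.exp (-(1/2 - a) * y ^ 2) := by
    funext y
    rw [← Real.exp_add]
    congr 1
    ring
  rw [heq, integral_gaussian, ← Real.sqrt_mul (by positivity)]
  congr 1
  have h2 : 1 - 2 * a > 0 := by linarith
  field_simp

end Gaussian

section Block

open Real

variable {ι : Type*} [Fintype ι] [DecidableEq ι]

noncomputable def X (c : ι → ℝ) (s : ι → Bool) : ℝ := ∑ i, c i * sgn (s i)

lemma E_sq (c : ι → ℝ) : E (fun s => (X c s) ^ 2) = ∑ i, c i ^ 2 := by
  rw [E]
  simp only [X]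
  rw [sum_sq c, mul_div_assoc]
  field_simp

lemma E_pow4 (c : ι → ℝ) : E (fun s => (X c s) ^ 4) ≤ 3 * (∑ i, c i ^ 2) ^ 2 := by
  rw [E]
  simp only [X]
  rw [div_le_iff₀ (by positivity : (0:ℝ) < 2 ^ (Fintype.card ι))]
  calc ∑ s : ι → Bool, (∑ i, c i * sgn (s i)) ^ 4
      ≤ 2 ^ (Fintype.card ι) * (3 * (∑ i, c i ^ 2) ^ 2) := sum_pow4 c Finset.univ
    _ = 3 * (∑ i, c i ^ 2) ^ 2 * 2 ^ (Fintype.card ι) := by ring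

lemma E_exp_mul (t : ℝ) (c : ι → ℝ) :
    E (fun s => Real.exp (t * X c s)) = ∏ i, Real.cosh (t * c i) := by
  have hpt : ∀ s : ι → Bool, Real.exp (t * X c s) = ∏ i, Real.exp (t * c i * sgn (s i)) := by
    intro s
    rw [← Real.exp_sum]
    congr 1
    rw [X, Finset.mul_sum]
    exact Finset.sum_congr rfl (fun i _ => by ring)
  simp only [hpt]
  rw [E_prod (fun i b => Real.exp (t * c i * sgn b))]
  apply Finset.prod_congr rfl
  intro i _
  rw [Real.cosh_eq]
  congr 2 <;> simp [sgn] <;> ring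

lemma E_exp_sq {l : ℝ} (hl : 0 ≤ l) (c : ι → ℝ) (hc : 2 * l * (∑ i, c i ^ 2) < 1) :
    E (fun s => Real.exp (l * (X c s) ^ 2)) ≤ Real.sqrt (1 - 2 * l * (∑ i, c i ^ 2))⁻¹ := by
  set σ2 := ∑ i, c i ^ 2 with hσ2
  have hσ2nn : 0 ≤ σ2 := Finset.sum_nonneg (fun i _ => sq_nonneg _)
  set t0 := Real.sqrt (2 * l) with ht0
  have ht0sq : t0 ^ 2 = 2 * l := Real.sq_sqrt (by linarith)
  have hsπ : (0:ℝ) < Real.sqrt (2 * π) := Real.sqrt_pos.2 (by positivity)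
  have hpt : ∀ s : ι → Bool, Real.exp (l * (X c s) ^ 2)
      = (Real.sqrt (2 * π))⁻¹ * ∫ y : ℝ, Real.exp (t0 * X c s * y) * Real.exp (-(y ^ 2) / 2) := by
    intro s
    rw [integral_g1 (t0 * X c s)]
    rw [mul_pow, ht0sq]
    rw [← mul_assoc, inv_mul_cancel₀ (ne_of_gt hsπ), one_mul]
    congr 1
    ring
  calc E (fun s => Real.exp (l * (X c s) ^ 2))
      = (Real.sqrt (2 * π))⁻¹ * E (fun s =>
          ∫ y : ℝ, Real.exp (t0 * X c s * y) * Real.exp (-(y ^ 2) / 2)) := by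
        rw [← E_smul]
        exact congrArg E (funext hpt)
    _ ≤ (Real.sqrt (2 * π))⁻¹ * (Real.sqrt (2 * π) * Real.sqrt (1 - 2 * l * σ2)⁻¹) := by
        apply mul_le_mul_of_nonneg_left ?_ (by positivity)
        rw [E, div_le_iff₀ (by positivity : (0:ℝ) < 2 ^ (Fintype.card ι))]
        have hswap : ∑ s : ι → Bool, ∫ y : ℝ, Real.exp (t0 * X c s * y) * Real.exp (-(y ^ 2) / 2)
            = ∫ y : ℝ, ∑ s : ι → Bool, Real.exp (t0 * X c s * y) * Real.exp (-(y ^ 2) / 2) :=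
          (MeasureTheory.integral_finset_sum Finset.univ
            (fun s _ => integrable_g3 (t0 * X c s))).symm
        rw [hswap]
        have hptw : ∀ y : ℝ, ∑ s : ι → Bool, Real.exp (t0 * X c s * y) * Real.exp (-(y ^ 2) / 2)
            ≤ 2 ^ (Fintype.card ι) * (Real.exp (l * σ2 * y ^ 2) * Real.exp (-(y ^ 2) / 2)) := by
          intro y
          have h2 : ∀ s : ι → Bool, Real.exp (t0 * X c s * y) = Real.exp ((t0 * y) * X c s) := by
            intro s; congr 1; ring
          have h1 : ∑ s : ι → Bool, Real.exp ((t0 * y) * X c s)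
              ≤ 2 ^ (Fintype.card ι) * Real.exp (l * σ2 * y ^ 2) := by
            have h3 : ∑ s : ι → Bool, Real.exp ((t0 * y) * X c s)
                = 2 ^ (Fintype.card ι) * ∏ i, Real.cosh ((t0 * y) * c i) := by
              have := E_exp_mul (ι := ι) (t0 * y) c
              rw [E, div_eq_iff (by positivity : (2:ℝ) ^ (Fintype.card ι) ≠ 0)] at this
              rw [this]; ring
            rw [h3]
            apply mul_le_mul_of_nonneg_left ?_ (by positivity)
            calc ∏ i, Real.cosh ((t0 * y) * c i)
                ≤ ∏ i, Real.exp (((t0 * y) * c i) ^ 2 / 2) := by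
                  apply Finset.prod_le_prod (fun i _ => (Real.cosh_pos _).le)
                  exact fun i _ => Real.cosh_le_exp_half_sq _
              _ = Real.exp (l * σ2 * y ^ 2) := by
                  rw [← Real.exp_sum]
                  congr 1
                  rw [← Finset.sum_div]
                  have : ∑ i, ((t0 * y) * c i) ^ 2 = t0 ^ 2 * y ^ 2 * σ2 := by
                    rw [hσ2, Finset.mul_sum]
                    exact Finset.sum_congr rfl (fun i _ => by ring)
                  rw [this, ht0sq]
                  ring
          calc ∑ s : ι → Bool, Real.exp (t0 * X c s * y) * Real.exp (-(y ^ 2) / 2)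
              = (∑ s : ι → Bool, Real.exp (t0 * X c s * y)) * Real.exp (-(y ^ 2) / 2) := by
                rw [Finset.sum_mul]
            _ ≤ (2 ^ (Fintype.card ι) * Real.exp (l * σ2 * y ^ 2)) * Real.exp (-(y ^ 2) / 2) := by
                simp only [h2]
                exact mul_le_mul_of_nonneg_right h1 (Real.exp_pos _).le
            _ = 2 ^ (Fintype.card ι) * (Real.exp (l * σ2 * y ^ 2) * Real.exp (-(y ^ 2) / 2)) := by ring
        have ha : l * σ2 < 1/2 := by linarith
        calc ∫ y : ℝ, ∑ s : ι → Bool, Real.exp (t0 * X c s * y) * Real.exp (-(y ^ 2) / 2)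
            ≤ ∫ y : ℝ, 2 ^ (Fintype.card ι) * (Real.exp (l * σ2 * y ^ 2) * Real.exp (-(y ^ 2) / 2)) := by
              apply MeasureTheory.integral_mono ?_ ?_ hptw
              · exact MeasureTheory.integrable_finset_sum Finset.univ
                  (fun s _ => integrable_g3 (t0 * X c s))
              · exact (integrable_g2 ha).const_mul _
          _ = 2 ^ (Fintype.card ι) * (Real.sqrt (2 * π) * Real.sqrt (1 - 2 * (l * σ2))⁻¹) := by
              rw [MeasureTheory.integral_const_mul, integral_g2 ha]
          _ = Real.sqrt (2 * π) * Real.sqrt (1 - 2 * l * σ2)⁻¹ * 2 ^ (Fintype.card ι) := by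
              rw [mul_assoc (2 : ℝ) l σ2]
              ring
    _ = Real.sqrt (1 - 2 * l * σ2)⁻¹ := by
        rw [← mul_assoc, inv_mul_cancel₀ (ne_of_gt hsπ), one_mul]

lemma E_exp_neg_sq {l : ℝ} (hl : 0 ≤ l) (c : ι → ℝ) :
    E (fun s => Real.exp (-(l * (X c s) ^ 2)))
      ≤ 1 - l * (∑ i, c i ^ 2) + 3 / 2 * l ^ 2 * (∑ i, c i ^ 2) ^ 2 := by
  set σ2 := ∑ i, c i ^ 2 with hσ2
  have step1 : E (fun s => Real.exp (-(l * (X c s) ^ 2)))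
      ≤ E (fun s => 1 + (-(l * (X c s) ^ 2)) + (l ^ 2 / 2) * (X c s) ^ 4) := by
    apply E_mono
    intro s
    have h := exp_le_quad (x := -(l * (X c s) ^ 2))
      (by simpa using mul_nonneg hl (sq_nonneg (X c s)))
    calc Real.exp (-(l * (X c s) ^ 2))
        ≤ 1 + (-(l * (X c s) ^ 2)) + (-(l * (X c s) ^ 2)) ^ 2 / 2 := h
      _ = 1 + (-(l * (X c s) ^ 2)) + (l ^ 2 / 2) * (X c s) ^ 4 := by ring
  have step2 : E (fun s : ι → Bool => 1 + (-(l * (X c s) ^ 2)) + (l ^ 2 / 2) * (X c s) ^ 4)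
      = 1 - l * σ2 + (l ^ 2 / 2) * E (fun s => (X c s) ^ 4) := by
    rw [E_add, E_add]
    rw [E_const 1]
    have e1 : E (fun s => -(l * (X c s) ^ 2)) = - (l * σ2) := by
      have : (fun (s : ι → Bool) => -(l * (X c s) ^ 2)) = fun s => (-l) * (X c s) ^ 2 := by
        funext s; ring
      rw [this, E_smul, E_sq]
      ring
    rw [e1, E_smul]
    ring
  have step3 : (l ^ 2 / 2) * E (fun s => (X c s) ^ 4) ≤ (l ^ 2 / 2) * (3 * σ2 ^ 2) :=
    mul_le_mul_of_nonneg_left (E_pow4 c) (by positivity)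
  calc E (fun s => Real.exp (-(l * (X c s) ^ 2)))
      ≤ 1 - l * σ2 + (l ^ 2 / 2) * E (fun s => (X c s) ^ 4) := by rw [← step2]; exact step1
    _ ≤ 1 - l * σ2 + (l ^ 2 / 2) * (3 * σ2 ^ 2) := by linarith
    _ = 1 - l * σ2 + 3 / 2 * l ^ 2 * σ2 ^ 2 := by ring

end Block

section Blocks

lemma E_prod_blocks {α β : Type*} [Fintype α] [DecidableEq α] [Fintype β] [DecidableEq β]
    (G : α → (β → Bool) → ℝ) :
    E (fun s : α × β → Bool => ∏ p, G p (fun j => s (p, j)))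
      = ∏ p, E (G p) := by
  unfold E
  have hre : ∑ s : α × β → Bool, ∏ p, G p (fun j => s (p, j))
      = ∑ f : α → β → Bool, ∏ p, G p (f p) := by
    rw [← Equiv.sum_comp ((Equiv.curry α β Bool).symm)
      (fun s : α × β → Bool => ∏ p, G p (fun j => s (p, j)))]
    rfl
  rw [hre]
  have := Finset.prod_univ_sum (fun _ : α => (Finset.univ : Finset (β → Bool)))
    (fun p t => G p t)
  rw [Fintype.piFinset_univ] at this
  rw [← this, Finset.prod_div_distrib]
  congr 1
  rw [Finset.prod_const, card_univ, Fintype.card_prod, ← pow_mul, mul_comm]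

end Blocks

section Bridge

noncomputable def mu0 : Measure ℝ :=
  (1 / 2 : ENNReal) • Measure.dirac (1 : ℝ) + (1 / 2 : ENNReal) • Measure.dirac (-1 : ℝ)

instance : IsProbabilityMeasure (mu0) := by
  constructor
  simp [mu0]
  exact ENNReal.inv_two_add_inv_two

lemma pi_mu0_apply {ι : Type*} [Fintype ι] [DecidableEq ι]
    {B : Set (ι → ℝ)} (hB : MeasurableSet B) :
    Measure.pi (fun _ : ι => mu0) B
      = ∑ s : ι → Bool, ((2 : ENNReal) ^ (Fintype.card ι))⁻¹
          * (if (fun i => sgn (s i)) ∈ B then 1 else 0) := by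
  have hν : (∑ s : ι → Bool,
      (((2 : ENNReal) ^ (Fintype.card ι))⁻¹ • Measure.dirac (fun i => sgn (s i))))
        = Measure.pi (fun _ : ι => mu0) := by
    refine (Measure.pi_eq ?_).symm
    intro A hA
    rw [Measure.finset_sum_apply]
    simp only [Measure.smul_apply, smul_eq_mul,
      Measure.dirac_apply' _ (MeasurableSet.univ_pi hA)]
    have hind : ∀ s : ι → Bool,
        (Set.pi Set.univ A).indicator (1 : (ι → ℝ) → ENNReal) (fun i => sgn (s i))
          = ∏ i, (if sgn (s i) ∈ A i then (1:ENNReal) else 0) := by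
      intro s
      rw [Set.indicator_apply]
      by_cases hmem : (fun i => sgn (s i)) ∈ Set.pi Set.univ A
      · rw [if_pos hmem, Pi.one_apply]
        rw [Set.mem_univ_pi] at hmem
        exact (Finset.prod_eq_one (fun i _ => by rw [if_pos (hmem i)])).symm
      · rw [if_neg hmem]
        rw [Set.mem_univ_pi] at hmem
        push_neg at hmem
        obtain ⟨i, hi⟩ := hmem
        exact (Finset.prod_eq_zero (Finset.mem_univ i) (by rw [if_neg hi])).symm
    simp only [hind]
    have hfac : ∀ s : ι → Bool, ((2 : ENNReal) ^ (Fintype.card ι))⁻¹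
          * ∏ i, (if sgn (s i) ∈ A i then (1:ENNReal) else 0)
        = ∏ i, ((2 : ENNReal))⁻¹ * (if sgn (s i) ∈ A i then (1:ENNReal) else 0) := by
      intro s
      rw [Finset.prod_mul_distrib, Finset.prod_const, Finset.card_univ, ← ENNReal.inv_pow]
    simp only [hfac]
    have := Finset.prod_univ_sum (fun _ : ι => (Finset.univ : Finset Bool))
      (fun i b => ((2 : ENNReal))⁻¹ * (if sgn b ∈ A i then (1:ENNReal) else 0))
    rw [Fintype.piFinset_univ] at this
    rw [← this]
    apply Finset.prod_congr rfl
    intro i _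
    rw [Fintype.sum_bool]
    rw [mu0]
    simp only [Measure.add_apply, Measure.smul_apply, smul_eq_mul,
      Measure.dirac_apply' _ (hA i)]
    rw [Set.indicator_apply, Set.indicator_apply]
    simp [sgn, one_div]
  rw [← hν, Measure.finset_sum_apply]
  simp only [Measure.smul_apply, smul_eq_mul, Measure.dirac_apply' _ hB]
  apply Finset.sum_congr rfl
  intro s _
  rw [Set.indicator_apply]
  by_cases hmem : (fun i => sgn (s i)) ∈ B
  · rw [if_pos hmem, if_pos hmem, Pi.one_apply]
  · rw [if_neg hmem, if_neg hmem]

lemma map_eq_pi {ι : Type*} [Fintype ι] {Ω : Type*} [MeasureSpace Ω]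
    [IsProbabilityMeasure (ℙ : Measure Ω)] (ε : ι → Ω → ℝ)
    (hmeas : ∀ i, Measurable (ε i))
    (hindep : iIndepFun ε ℙ)
    (hlaw : ∀ i, Measure.map (ε i) ℙ = mu0) :
    Measure.map (fun ω i => ε i ω) ℙ = Measure.pi (fun _ : ι => mu0) := by
  have hT : Measurable (fun ω i => ε i ω) := measurable_pi_lambda _ hmeas
  refine (Measure.pi_eq ?_).symm
  intro A hA
  rw [Measure.map_apply hT (MeasurableSet.univ_pi hA)]
  have hpre : (fun ω i => ε i ω) ⁻¹' (Set.pi Set.univ A)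
      = ⋂ i ∈ (Finset.univ : Finset ι), ε i ⁻¹' A i := by
    ext ω
    simp [Set.mem_pi]
  rw [hpre, hindep.measure_inter_preimage_eq_mul Finset.univ (fun i _ => hA i)]
  apply Finset.prod_congr rfl
  intro i _
  rw [← Measure.map_apply (hmeas i) (hA i), hlaw i]

end Bridge

end RCC

/-- Concentration for rows of Rademacher series: with `X_p = Σ_q Σ_ℓ
ε_ℓ^{pq} h_ℓ v_q`, `‖v‖₂ = 1`, `‖h‖₂ = 1/√m`, one has
`ℙ(|Σ_p X_p² − 1| ≥ ε) ≤ 2 exp(−(m/2)(ε²/2 − ε³/3))`. -/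
theorem rademacher_chaos_concentration (m N : ℕ) (Ω : Type*) [MeasureSpace Ω]
    [IsProbabilityMeasure (ℙ : Measure Ω)]
    (ε : Fin m × Fin N × Fin m → Ω → ℝ)
    (hmeas : ∀ i, Measurable (ε i))
    (hindep : iIndepFun ε ℙ)
    (hlaw : ∀ i, Measure.map (ε i) ℙ =
      (1 / 2 : ENNReal) • Measure.dirac (1 : ℝ) +
        (1 / 2 : ENNReal) • Measure.dirac (-1 : ℝ))
    (v : Fin N → ℝ) (hv : ∑ q, v q ^ 2 = 1)
    (h : Fin m → ℝ) (hh : ∑ l, h l ^ 2 = 1 / m)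
    (ε' : ℝ) (hε0 : 0 < ε') (hε1 : ε' < 1) :
    ℙ {ω | ε' ≤
        |(∑ p, (∑ q, ∑ l, ε (p, q, l) ω * h l * v q) ^ 2) - 1|} ≤
      ENNReal.ofReal
        (2 * Real.exp (-((m : ℝ) / 2) * (ε' ^ 2 / 2 - ε' ^ 3 / 3))) := by
  classical
  rcases Nat.eq_zero_or_pos m with hm0 | hm
  · -- degenerate case m = 0
    subst hm0
    have huniv : {ω | ε' ≤
        |(∑ p, (∑ q, ∑ l, ε (p, q, l) ω * h l * v q) ^ 2) - 1|} = Set.univ := by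
      ext ω
      simp only [Set.mem_setOf_eq, Set.mem_univ, iff_true]
      have : (∑ p : Fin 0, (∑ q, ∑ l : Fin 0, ε (p, q, l) ω * h l * v q) ^ 2) = 0 :=
        Finset.sum_empty
      rw [this]
      rw [show |(0:ℝ) - 1| = 1 by norm_num]
      linarith
    rw [huniv, measure_univ]
    have h2 : (1:ℝ) ≤ 2 * Real.exp (-(((0:ℕ) : ℝ) / 2) * (ε' ^ 2 / 2 - ε' ^ 3 / 3)) := by
      have hz : -(((0:ℕ) : ℝ) / 2) * (ε' ^ 2 / 2 - ε' ^ 3 / 3) = 0 := by norm_num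
      rw [hz, Real.exp_zero]
      norm_num
    calc (1 : ENNReal) = ENNReal.ofReal 1 := by simp
      _ ≤ _ := ENNReal.ofReal_le_ofReal (by exact_mod_cast h2)
  · -- main case
    have hmpos : (0:ℝ) < m := by exact_mod_cast hm
    have hε1' : (0:ℝ) < 1 + ε' := by linarith
    set c : Fin N × Fin m → ℝ := fun j => h j.2 * v j.1 with hcdef
    have hσ2 : ∑ j : Fin N × Fin m, c j ^ 2 = 1 / m := by
      rw [Fintype.sum_prod_type]
      have hinner : ∀ q : Fin N, ∑ l : Fin m, c (q, l) ^ 2 = v q ^ 2 * (1 / m) := by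
        intro q
        rw [← hh, Finset.mul_sum]
        apply Finset.sum_congr rfl
        intro l _
        simp only [hcdef]
        ring
      rw [Finset.sum_congr rfl (fun q _ => hinner q), ← Finset.sum_mul, hv, one_mul]
    -- the event as a preimage
    have hBm : MeasurableSet {x : (Fin m × Fin N × Fin m) → ℝ |
        ε' ≤ |(∑ p, (∑ q, ∑ l, x (p, q, l) * h l * v q) ^ 2) - 1|} := by
      apply measurableSet_le measurable_const
      apply Measurable.abs
      apply Measurable.sub ?_ measurable_const
      apply Finset.measurable_sum
      intro p _
      apply Measurable.pow_const
      apply Finset.measurable_sum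
      intro q _
      apply Finset.measurable_sum
      intro l _
      exact ((measurable_pi_apply (p, q, l)).mul_const _).mul_const _
    have hT : Measurable (fun ω (i : Fin m × Fin N × Fin m) => ε i ω) :=
      measurable_pi_lambda _ hmeas
    have hevent : {ω | ε' ≤
        |(∑ p, (∑ q, ∑ l, ε (p, q, l) ω * h l * v q) ^ 2) - 1|}
        = (fun ω (i : Fin m × Fin N × Fin m) => ε i ω) ⁻¹'
          {x : (Fin m × Fin N × Fin m) → ℝ |
            ε' ≤ |(∑ p, (∑ q, ∑ l, x (p, q, l) * h l * v q) ^ 2) - 1|} := rfl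
    rw [hevent, ← Measure.map_apply hT hBm,
      RCC.map_eq_pi ε hmeas hindep (fun i => by rw [hlaw i]; rfl),
      RCC.pi_mu0_apply hBm]
    -- discrete side quantities
    set S : ((Fin m × Fin N × Fin m) → Bool) → ℝ :=
      fun s => ∑ p, (RCC.X c (fun j => s (p, j))) ^ 2 with hSdef
    have hSsum : ∀ s : (Fin m × Fin N × Fin m) → Bool,
        (∑ p, (∑ q, ∑ l, RCC.sgn (s (p, q, l)) * h l * v q) ^ 2) = S s := by
      intro s
      apply Finset.sum_congr rfl
      intro p _
      congr 1
      rw [RCC.X, Fintype.sum_prod_type]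
      apply Finset.sum_congr rfl
      intro q _
      apply Finset.sum_congr rfl
      intro l _
      simp only [hcdef]
      ring
    set R : ℝ := Real.exp (-(1/2) * (ε' ^ 2 / 2 - ε' ^ 3 / 3)) with hRdef
    have hRpos : 0 < R := Real.exp_pos _
    -- core real estimate
    have key : RCC.E (fun s : (Fin m × Fin N × Fin m) → Bool =>
        if ε' ≤ |S s - 1| then (1:ℝ) else 0) ≤ 2 * R ^ m := by
      -- split indicator
      have hsplit : RCC.E (fun s : (Fin m × Fin N × Fin m) → Bool =>
          if ε' ≤ |S s - 1| then (1:ℝ) else 0)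
          ≤ RCC.E (fun s => if 1 + ε' ≤ S s then (1:ℝ) else 0)
            + RCC.E (fun s => if S s ≤ 1 - ε' then (1:ℝ) else 0) := by
        rw [← RCC.E_add]
        apply RCC.E_mono
        intro s
        by_cases hcase : ε' ≤ |S s - 1|
        · rw [if_pos hcase]
          rcases le_abs.1 hcase with h1 | h1
          · rw [if_pos (by linarith : 1 + ε' ≤ S s)]
            have : (0:ℝ) ≤ if S s ≤ 1 - ε' then (1:ℝ) else 0 := by split_ifs <;> norm_num
            linarith
          · rw [if_pos (by linarith : S s ≤ 1 - ε')]
            have : (0:ℝ) ≤ if 1 + ε' ≤ S s then (1:ℝ) else 0 := by split_ifs <;> norm_num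
            linarith
        · rw [if_neg hcase]
          have h1 : (0:ℝ) ≤ if 1 + ε' ≤ S s then (1:ℝ) else 0 := by split_ifs <;> norm_num
          have h2 : (0:ℝ) ≤ if S s ≤ 1 - ε' then (1:ℝ) else 0 := by split_ifs <;> norm_num
          linarith
      -- upper tail
      set l1 : ℝ := m * ε' / (2 * (1 + ε')) with hl1def
      have hl1nn : 0 ≤ l1 := by positivity
      have hup : RCC.E (fun s : (Fin m × Fin N × Fin m) → Bool =>
          if 1 + ε' ≤ S s then (1:ℝ) else 0) ≤ R ^ m := by
        have hch : ∀ s : (Fin m × Fin N × Fin m) → Bool,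
            (if 1 + ε' ≤ S s then (1:ℝ) else 0)
              ≤ Real.exp (-(l1 * (1 + ε'))) * Real.exp (l1 * S s) := by
          intro s
          rw [← Real.exp_add]
          by_cases hcase : 1 + ε' ≤ S s
          · rw [if_pos hcase]
            apply Real.one_le_exp
            have := mul_nonneg hl1nn (sub_nonneg.2 hcase)
            nlinarith
          · rw [if_neg hcase]
            exact (Real.exp_pos _).le
        have hfact : RCC.E (fun s : (Fin m × Fin N × Fin m) → Bool =>
            Real.exp (l1 * S s))
            = ∏ _p : Fin m, RCC.E (fun t : (Fin N × Fin m) → Bool =>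
                Real.exp (l1 * (RCC.X c t) ^ 2)) := by
          have hpt : ∀ s : (Fin m × Fin N × Fin m) → Bool, Real.exp (l1 * S s)
              = ∏ p : Fin m, Real.exp (l1 * (RCC.X c (fun j => s (p, j))) ^ 2) := by
            intro s
            rw [← Real.exp_sum]
            congr 1
            rw [hSdef, Finset.mul_sum]
          simp only [hpt]
          exact RCC.E_prod_blocks (fun _p t => Real.exp (l1 * (RCC.X c t) ^ 2))
        have e1 : 2 * l1 * (∑ j : Fin N × Fin m, c j ^ 2) = ε' / (1 + ε') := by
          rw [hσ2, hl1def]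
          field_simp
        have h2l1 : 2 * l1 * (∑ j : Fin N × Fin m, c j ^ 2) < 1 := by
          rw [e1, div_lt_one hε1']
          linarith
        have hinveq : (1 - 2 * l1 * (∑ j : Fin N × Fin m, c j ^ 2))⁻¹ = 1 + ε' := by
          rw [e1]
          rw [show 1 - ε' / (1 + ε') = (1 + ε')⁻¹ by
            rw [eq_comm, inv_eq_iff_eq_inv, eq_comm, inv_eq_one_div]
            field_simp
            ring]
          rw [inv_inv]
        have hblock : RCC.E (fun t : (Fin N × Fin m) → Bool =>
            Real.exp (l1 * (RCC.X c t) ^ 2)) ≤ Real.sqrt (1 + ε') := by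
          have := RCC.E_exp_sq hl1nn c h2l1
          rwa [hinveq] at this
        have hrow : Real.exp (-(l1 * (1 + ε'))) * Real.sqrt (1 + ε') ^ m ≤ R ^ m := by
          have hexp1 : Real.exp (-(l1 * (1 + ε'))) = Real.exp (-(ε' / 2)) ^ m := by
            rw [← Real.exp_nat_mul]
            congr 1
            rw [hl1def]
            field_simp
          rw [hexp1, ← mul_pow]
          apply pow_le_pow_left₀ (by positivity)
          -- per-row inequality
          have hs1 := RCC.S1 hε0.le hε1.le
          have hsqrt : Real.sqrt (1 + ε')
              ≤ Real.exp ((ε' - ε' ^ 2 / 2 + ε' ^ 3 / 3) / 2) := by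
            have h1 : Real.exp (ε' - ε' ^ 2 / 2 + ε' ^ 3 / 3)
                = Real.exp ((ε' - ε' ^ 2 / 2 + ε' ^ 3 / 3) / 2) ^ 2 := by
              rw [← Real.exp_nat_mul]
              congr 1
              push_cast
              ring
            calc Real.sqrt (1 + ε') ≤ Real.sqrt (Real.exp (ε' - ε' ^ 2 / 2 + ε' ^ 3 / 3)) :=
                  Real.sqrt_le_sqrt hs1
              _ = Real.exp ((ε' - ε' ^ 2 / 2 + ε' ^ 3 / 3) / 2) := by
                  rw [h1, Real.sqrt_sq (Real.exp_pos _).le]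
          calc Real.exp (-(ε' / 2)) * Real.sqrt (1 + ε')
              ≤ Real.exp (-(ε' / 2)) * Real.exp ((ε' - ε' ^ 2 / 2 + ε' ^ 3 / 3) / 2) :=
                mul_le_mul_of_nonneg_left hsqrt (Real.exp_pos _).le
            _ = R := by
                rw [← Real.exp_add, hRdef]
                congr 1
                ring
        calc RCC.E (fun s : (Fin m × Fin N × Fin m) → Bool =>
            if 1 + ε' ≤ S s then (1:ℝ) else 0)
            ≤ RCC.E (fun s => Real.exp (-(l1 * (1 + ε'))) * Real.exp (l1 * S s)) :=
              RCC.E_mono hch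
          _ = Real.exp (-(l1 * (1 + ε'))) * RCC.E (fun s => Real.exp (l1 * S s)) :=
              RCC.E_smul _ _
          _ ≤ Real.exp (-(l1 * (1 + ε'))) * Real.sqrt (1 + ε') ^ m := by
              apply mul_le_mul_of_nonneg_left ?_ (Real.exp_pos _).le
              rw [hfact]
              calc ∏ _p : Fin m, RCC.E (fun t : (Fin N × Fin m) → Bool =>
                  Real.exp (l1 * (RCC.X c t) ^ 2))
                  ≤ ∏ _p : Fin m, Real.sqrt (1 + ε') :=
                    Finset.prod_le_prod
                      (fun _ _ => RCC.E_nonneg (fun t => (Real.exp_pos _).le))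
                      (fun _ _ => hblock)
                _ = Real.sqrt (1 + ε') ^ m := by
                    rw [Finset.prod_const, Finset.card_univ, Fintype.card_fin]
          _ ≤ R ^ m := hrow
      -- lower tail
      set l2 : ℝ := m * ε' / 2 with hl2def
      have hl2nn : 0 ≤ l2 := by positivity
      have hlow : RCC.E (fun s : (Fin m × Fin N × Fin m) → Bool =>
          if S s ≤ 1 - ε' then (1:ℝ) else 0) ≤ R ^ m := by
        have hch : ∀ s : (Fin m × Fin N × Fin m) → Bool,
            (if S s ≤ 1 - ε' then (1:ℝ) else 0)
              ≤ Real.exp (l2 * (1 - ε')) * Real.exp (-(l2 * S s)) := by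
          intro s
          rw [← Real.exp_add]
          by_cases hcase : S s ≤ 1 - ε'
          · rw [if_pos hcase]
            apply Real.one_le_exp
            have := mul_nonneg hl2nn (sub_nonneg.2 hcase)
            nlinarith
          · rw [if_neg hcase]
            exact (Real.exp_pos _).le
        have hfact : RCC.E (fun s : (Fin m × Fin N × Fin m) → Bool =>
            Real.exp (-(l2 * S s)))
            = ∏ _p : Fin m, RCC.E (fun t : (Fin N × Fin m) → Bool =>
                Real.exp (-(l2 * (RCC.X c t) ^ 2))) := by
          have hpt : ∀ s : (Fin m × Fin N × Fin m) → Bool, Real.exp (-(l2 * S s))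
              = ∏ p : Fin m, Real.exp (-(l2 * (RCC.X c (fun j => s (p, j))) ^ 2)) := by
            intro s
            rw [← Real.exp_sum]
            congr 1
            rw [hSdef, Finset.mul_sum, ← Finset.sum_neg_distrib]
          simp only [hpt]
          exact RCC.E_prod_blocks (fun _p t => Real.exp (-(l2 * (RCC.X c t) ^ 2)))
        have hβval : 1 - l2 * (∑ j : Fin N × Fin m, c j ^ 2)
            + 3 / 2 * l2 ^ 2 * (∑ j : Fin N × Fin m, c j ^ 2) ^ 2
            = 1 - ε' / 2 + 3 * ε' ^ 2 / 8 := by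
          rw [hσ2, hl2def]
          field_simp
          ring
        have hblock : RCC.E (fun t : (Fin N × Fin m) → Bool =>
            Real.exp (-(l2 * (RCC.X c t) ^ 2))) ≤ 1 - ε' / 2 + 3 * ε' ^ 2 / 8 := by
          have := RCC.E_exp_neg_sq hl2nn c
          rwa [hβval] at this
        have hβnn : (0:ℝ) ≤ 1 - ε' / 2 + 3 * ε' ^ 2 / 8 := by nlinarith
        have hrow : Real.exp (l2 * (1 - ε')) * (1 - ε' / 2 + 3 * ε' ^ 2 / 8) ^ m ≤ R ^ m := by
          have hexp1 : Real.exp (l2 * (1 - ε')) = Real.exp (ε' / 2 * (1 - ε')) ^ m := by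
            rw [← Real.exp_nat_mul]
            congr 1
            rw [hl2def]
            ring
          rw [hexp1, ← mul_pow]
          apply pow_le_pow_left₀ (by positivity)
          have hs2 := RCC.S2 hε0.le hε1.le
          calc Real.exp (ε' / 2 * (1 - ε')) * (1 - ε' / 2 + 3 * ε' ^ 2 / 8)
              ≤ Real.exp (ε' / 2 * (1 - ε'))
                  * Real.exp (-ε' / 2 + ε' ^ 2 / 4 + ε' ^ 3 / 6) :=
                mul_le_mul_of_nonneg_left hs2 (Real.exp_pos _).le
            _ = R := by
                rw [← Real.exp_add, hRdef]
                congr 1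
                ring
        calc RCC.E (fun s : (Fin m × Fin N × Fin m) → Bool =>
            if S s ≤ 1 - ε' then (1:ℝ) else 0)
            ≤ RCC.E (fun s => Real.exp (l2 * (1 - ε')) * Real.exp (-(l2 * S s))) :=
              RCC.E_mono hch
          _ = Real.exp (l2 * (1 - ε')) * RCC.E (fun s => Real.exp (-(l2 * S s))) :=
              RCC.E_smul _ _
          _ ≤ Real.exp (l2 * (1 - ε')) * (1 - ε' / 2 + 3 * ε' ^ 2 / 8) ^ m := by
              apply mul_le_mul_of_nonneg_left ?_ (Real.exp_pos _).le
              rw [hfact]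
              calc ∏ _p : Fin m, RCC.E (fun t : (Fin N × Fin m) → Bool =>
                  Real.exp (-(l2 * (RCC.X c t) ^ 2)))
                  ≤ ∏ _p : Fin m, (1 - ε' / 2 + 3 * ε' ^ 2 / 8) :=
                    Finset.prod_le_prod
                      (fun _ _ => RCC.E_nonneg (fun t => (Real.exp_pos _).le))
                      (fun _ _ => hblock)
                _ = (1 - ε' / 2 + 3 * ε' ^ 2 / 8) ^ m := by
                    rw [Finset.prod_const, Finset.card_univ, Fintype.card_fin]
          _ ≤ R ^ m := hrow
      calc RCC.E (fun s : (Fin m × Fin N × Fin m) → Bool =>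
          if ε' ≤ |S s - 1| then (1:ℝ) else 0)
          ≤ RCC.E (fun s => if 1 + ε' ≤ S s then (1:ℝ) else 0)
            + RCC.E (fun s => if S s ≤ 1 - ε' then (1:ℝ) else 0) := hsplit
        _ ≤ R ^ m + R ^ m := add_le_add hup hlow
        _ = 2 * R ^ m := by ring
    -- convert the ENNReal goal to the real estimate
    have hmemiff : ∀ s : (Fin m × Fin N × Fin m) → Bool,
        ((fun i => RCC.sgn (s i)) ∈ {x : (Fin m × Fin N × Fin m) → ℝ |
            ε' ≤ |(∑ p, (∑ q, ∑ l, x (p, q, l) * h l * v q) ^ 2) - 1|})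
          ↔ ε' ≤ |S s - 1| := by
      intro s
      rw [Set.mem_setOf_eq, hSsum s]
    have hconv : (∑ s : (Fin m × Fin N × Fin m) → Bool,
        ((2 : ENNReal) ^ (Fintype.card (Fin m × Fin N × Fin m)))⁻¹
          * (if (fun i => RCC.sgn (s i)) ∈ {x : (Fin m × Fin N × Fin m) → ℝ |
              ε' ≤ |(∑ p, (∑ q, ∑ l, x (p, q, l) * h l * v q) ^ 2) - 1|} then 1 else 0))
        = ENNReal.ofReal (RCC.E (fun s : (Fin m × Fin N × Fin m) → Bool =>
            if ε' ≤ |S s - 1| then (1:ℝ) else 0)) := by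
      rw [RCC.E]
      rw [ENNReal.ofReal_div_of_pos (by positivity)]
      rw [ENNReal.ofReal_sum_of_nonneg (fun s _ => by positivity)]
      rw [show ENNReal.ofReal ((2:ℝ) ^ (Fintype.card (Fin m × Fin N × Fin m)))
          = (2 : ENNReal) ^ (Fintype.card (Fin m × Fin N × Fin m)) by
        rw [ENNReal.ofReal_pow (by norm_num)]
        norm_num]
      rw [ENNReal.div_eq_inv_mul, Finset.mul_sum]
      apply Finset.sum_congr rfl
      intro s _
      congr 1
      rw [if_congr (hmemiff s) rfl rfl]
      split_ifs <;> simp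
    rw [hconv]
    apply ENNReal.ofReal_le_ofReal
    calc RCC.E (fun s : (Fin m × Fin N × Fin m) → Bool =>
        if ε' ≤ |S s - 1| then (1:ℝ) else 0) ≤ 2 * R ^ m := key
      _ = 2 * Real.exp (-((m : ℝ) / 2) * (ε' ^ 2 / 2 - ε' ^ 3 / 3)) := by
          rw [hRdef, ← Real.exp_nat_mul]
          congr 2
          ring
end
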